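/- arXiv:1608.01589 — 8 statements merged into one kernel-verified Lean document; each statement's English description precedes it below -/
import Mathlib

section
/- There exist real constants c > 0 and C > 0 such that for every integer n ≥ 3, c·n·log n ≤ χ(CG(n)) ≤ χ(KG(n)) ≤ C·n·log n. In particular, the chromatic numbers of the total cyclic interval graph CG(n) and of the total Kneser graph KG(n) are both Θ(n log n). -/
/-- A partition of `{0,…,n-1}` (modeled as `Fin n`) into an unordered pair of nonempty
disjoint subsets covering everything, modeled as a 2-element finset of parts. -/
def TKPart (n : ℕ) (P : Finset (Finset (Fin n))) : Prop :=
  P.card = 2 ∧ (∀ A ∈ P, A.Nonempty) ∧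
    (∀ A ∈ P, ∀ B ∈ P, A ≠ B → Disjoint A B) ∧ P.sup id = Finset.univ

/-- Vertices of the total Kneser graph. -/
abbrev TKVert (n : ℕ) := {P : Finset (Finset (Fin n)) // TKPart n P}

/-- The total Kneser graph `KG(n)`: two distinct partitions are adjacent iff they are
nested, i.e. some part of one is contained in some part of the other. -/
def KG (n : ℕ) : SimpleGraph (TKVert n) where
  Adj P Q := P ≠ Q ∧
    ((∃ A ∈ P.1, ∃ C ∈ Q.1, A ⊆ C) ∨ (∃ C ∈ Q.1, ∃ A ∈ P.1, C ⊆ A))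
  symm := by
    refine ⟨?_⟩
    rintro P Q ⟨hne, h⟩
    refine ⟨hne.symm, ?_⟩
    rcases h with ⟨A, hA, C, hC, hAC⟩ | ⟨C, hC, A, hA, hCA⟩
    · exact Or.inr ⟨A, hA, C, hC, hAC⟩
    · exact Or.inl ⟨C, hC, A, hA, hCA⟩
  loopless := ⟨fun P h => h.1 rfl⟩

/-- `A ⊆ Fin n` is a cyclic interval `{i, i+1, …, i+k-1} (mod n)` with `1 ≤ k ≤ n-1`. -/
def IsCyclicInterval {n : ℕ} (A : Finset (Fin n)) : Prop :=
  ∃ i k : ℕ, 1 ≤ k ∧ k ≤ n - 1 ∧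
    (↑A : Set (Fin n)) = {x : Fin n | ∃ j < k, (x : ℕ) = (i + j) % n}

/-- The vertices of the total cyclic interval graph: partitions both of whose parts are
cyclic intervals. -/
def CGSet (n : ℕ) : Set (TKVert n) := {P | ∀ A ∈ P.1, IsCyclicInterval A}

/-- The total cyclic interval graph `CG(n)`, the induced subgraph of `KG(n)` on partitions
into cyclic intervals. -/
def CG (n : ℕ) : SimpleGraph (CGSet n) := (KG n).induce (CGSet n)

open Finset

variable {n : ℕ}

/-- val of Fin subtraction, case split. -/
lemma finSubVal (a b : Fin n) :
    (a - b).val = if b.val ≤ a.val then a.val - b.val else a.val + n - b.val := by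
  rw [Fin.sub_def]
  have hb := b.isLt
  have ha := a.isLt
  simp only []
  split
  · rename_i h
    have : n - b.val + a.val = n + (a.val - b.val) := by omega
    rw [this, Nat.add_mod_left, Nat.mod_eq_of_lt (by omega)]
  · rename_i h
    rw [Nat.mod_eq_of_lt (by omega)]
    omega

/-- The cyclic arc `[p, q)` in `Fin n`. -/
def arcF (p q : Fin n) : Finset (Fin n) :=
  Finset.univ.filter (fun x => (x - p).val < (q - p).val)

lemma mem_arcF {p q x : Fin n} : x ∈ arcF p q ↔ (x - p).val < (q - p).val := by
  simp [arcF]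

lemma sub_val_of_shift {p : Fin n} {j : ℕ} (hj : j < n) {x : Fin n}
    (hx : x.val = (p.val + j) % n) : (x - p).val = j := by
  have hp := p.isLt
  have hxn := x.isLt
  rw [finSubVal]
  rcases Nat.lt_or_ge (p.val + j) n with h | h
  · rw [Nat.mod_eq_of_lt h] at hx; split_ifs <;> omega
  · have : (p.val + j) % n = p.val + j - n := by
      rw [Nat.mod_eq_sub_mod h, Nat.mod_eq_of_lt (by omega)]
    rw [this] at hx; split_ifs <;> omega

lemma shift_of_sub_val (p x : Fin n) : x.val = (p.val + (x - p).val) % n := by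
  have hp := p.isLt
  have hxn := x.isLt
  rw [finSubVal]
  split_ifs with h
  · rw [Nat.mod_eq_of_lt (by omega)]; omega
  · have : p.val + (x.val + n - p.val) = n + x.val := by omega
    rw [this, Nat.add_mod_left, Nat.mod_eq_of_lt (by omega)]

lemma self_mem_arcF {p q : Fin n} (h : p ≠ q) : p ∈ arcF p q := by
  have : p.val ≠ q.val := fun hv => h (Fin.ext hv)
  have h1 := p.isLt
  have h2 := q.isLt
  rw [mem_arcF, finSubVal, finSubVal]
  split_ifs <;> omega

lemma arcF_compl {p q x : Fin n} (h : p ≠ q) : x ∈ arcF q p ↔ x ∉ arcF p q := by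
  have : p.val ≠ q.val := fun hv => h (Fin.ext hv)
  have h1 := p.isLt
  have h2 := q.isLt
  have h3 := x.isLt
  rw [mem_arcF, mem_arcF, finSubVal, finSubVal, finSubVal, finSubVal]
  split_ifs <;> omega

lemma arcF_subset_of_same_base {p q e : Fin n} (h : (q - p).val ≤ (e - p).val) :
    arcF p q ⊆ arcF p e := by
  intro x hx
  rw [mem_arcF] at hx ⊢
  omega

lemma card_arcF (p q : Fin n) : (arcF p q).card = (q - p).val := by
  classical
  set k := (q - p).val with hk
  have hkn : k < n ∨ (n = 0 ∧ k = 0) := by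
    rcases Nat.eq_zero_or_pos n with h | h
    · right; exact ⟨h, by omega⟩
    · left; exact (q - p).isLt
  have himg : (arcF p q).image (fun x => (x - p).val) = Finset.range k := by
    ext m
    simp only [Finset.mem_image, Finset.mem_range, mem_arcF]
    constructor
    · rintro ⟨x, hx, rfl⟩; exact hx
    · intro hm
      have hn : 0 < n := by omega
      refine ⟨⟨(p.val + m) % n, Nat.mod_lt _ hn⟩, ?_⟩
      have hsub : ((⟨(p.val + m) % n, Nat.mod_lt _ hn⟩ : Fin n) - p).val = m :=
        sub_val_of_shift (by omega) rfl
      exact ⟨by rw [hsub]; exact hm, hsub⟩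
  have hinj : Set.InjOn (fun x => (x - p).val) (arcF p q) := by
    intro x hx y hy hxy
    simp only at hxy
    have hx' := x.isLt
    have hy' := y.isLt
    have hp := p.isLt
    rw [finSubVal, finSubVal] at hxy
    apply Fin.ext
    split_ifs at hxy <;> omega
  calc (arcF p q).card = ((arcF p q).image (fun x => (x - p).val)).card :=
        (Finset.card_image_of_injOn hinj).symm
    _ = k := by rw [himg, Finset.card_range]
section Partitions

variable {n : ℕ}

lemma mem_arcF_shift {p q x : Fin n} :
    x ∈ arcF p q ↔ ∃ j, j < (q - p).val ∧ x.val = (p.val + j) % n := by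
  rw [mem_arcF]
  constructor
  · intro h
    exact ⟨(x - p).val, h, shift_of_sub_val p x⟩
  · rintro ⟨j, hj, hx⟩
    rw [sub_val_of_shift (lt_of_lt_of_le hj (le_of_lt (Fin.is_lt _))) hx]
    exact hj

lemma sub_val_ne_zero {p q : Fin n} (h : p ≠ q) : (q - p).val ≠ 0 := by
  intro h0
  have h1 := p.isLt
  have h2 := q.isLt
  rw [finSubVal] at h0
  apply h
  apply Fin.ext
  split_ifs at h0 <;> omega

lemma isCyclicInterval_arcF {p q : Fin n} (h : p ≠ q) : IsCyclicInterval (arcF p q) := by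
  refine ⟨p.val, (q - p).val, ?_, ?_, ?_⟩
  · have := sub_val_ne_zero h
    omega
  · have h1 := (q - p).isLt
    have := sub_val_ne_zero h
    omega
  · ext x
    simp only [Finset.coe_sort_coe, Set.mem_setOf_eq, Finset.mem_coe]
    rw [mem_arcF_shift]

lemma arcF_of_isCyclicInterval {A : Finset (Fin n)} (hn : 0 < n) (h : IsCyclicInterval A) :
    ∃ p q : Fin n, p ≠ q ∧ A = arcF p q := by
  obtain ⟨i, k, hk1, hk2, hset⟩ := h
  have hkn : k < n := by omega
  set p : Fin n := ⟨i % n, Nat.mod_lt _ hn⟩ with hp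
  set q : Fin n := ⟨(i + k) % n, Nat.mod_lt _ hn⟩ with hq
  have hqval : q.val = (p.val + k) % n := by
    simp only [hp, hq]
    conv_lhs => rw [Nat.add_mod, Nat.mod_eq_of_lt hkn]
  have hqp : (q - p).val = k := sub_val_of_shift hkn hqval
  refine ⟨p, q, ?_, ?_⟩
  · intro hpq
    rw [hpq, finSubVal] at hqp
    simp only [le_refl, if_true, Nat.sub_self] at hqp
    omega
  · ext x
    have hxA : x ∈ A ↔ ∃ j < k, (x : ℕ) = (i + j) % n := by
      rw [← Finset.mem_coe, hset]; rfl
    rw [hxA, mem_arcF_shift, hqp]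
    have hmod : ∀ j : ℕ, (p.val + j) % n = (i + j) % n := by
      intro j
      simp only [hp]
      exact Nat.mod_add_mod i n j
    constructor
    · rintro ⟨j, hj, hx⟩
      exact ⟨j, hj, by rw [hx, ← hmod]⟩
    · rintro ⟨j, hj, hx⟩
      exact ⟨j, hj, by rw [hx, hmod]⟩

end Partitions
section PartStruct

variable {n : ℕ}

lemma parts_structure (P : TKVert n) {A : Finset (Fin n)} (hA : A ∈ P.1) :
    P.1 = {A, Aᶜ} ∧ Aᶜ ∈ P.1 ∧ A.Nonempty ∧ (Aᶜ : Finset (Fin n)).Nonempty := by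
  classical
  obtain ⟨hcard, hne, hdisj, hsup⟩ := P.2
  obtain ⟨X, Y, hXY, hP⟩ := Finset.card_eq_two.mp hcard
  have hsupXY : X ∪ Y = Finset.univ := by
    rw [hP] at hsup
    simpa [Finset.sup_insert, Finset.sup_singleton] using hsup
  have hdisjXY : Disjoint X Y := by
    apply hdisj X (by rw [hP]; simp) Y (by rw [hP]; simp) hXY
  have hYX : Y = Xᶜ := by
    ext a
    simp only [Finset.mem_compl]
    constructor
    · intro haY haX
      exact (Finset.disjoint_left.mp hdisjXY haX) haY
    · intro haX
      have : a ∈ X ∪ Y := by rw [hsupXY]; exact Finset.mem_univ a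
      rcases Finset.mem_union.mp this with h | h
      · exact absurd h haX
      · exact h
  have hXY' : X = Yᶜ := by rw [hYX, compl_compl]
  rcases (by rw [hP] at hA; simpa using hA : A = X ∨ A = Y) with rfl | rfl
  · subst hYX
    exact ⟨hP, by rw [hP]; simp, hne _ hA, hne _ (by rw [hP]; simp)⟩
  · rw [← hXY'] at *
    refine ⟨by rw [hP]; exact Finset.pair_comm X A, by rw [hP]; simp, hne _ hA, ?_⟩
    rw [← hXY']
    exact hne _ (by rw [hP]; simp)
end PartStruct
section UpperAux

variable {n : ℕ}

lemma parts_eq_of_common {P Q : TKVert n} {A : Finset (Fin n)}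
    (hP : A ∈ P.1) (hQ : A ∈ Q.1) : P = Q := by
  apply Subtype.ext
  rw [(parts_structure P hP).1, (parts_structure Q hQ).1]

lemma card_part_compl {P : TKVert n} {A : Finset (Fin n)} (hA : A ∈ P.1) :
    A.card + (Aᶜ : Finset (Fin n)).card = n := by
  classical
  have := Finset.card_add_card_compl A
  simpa using this

/-- `j`-th smallest of superset is at most `j`-th smallest of subset. -/
lemma nth_le_nth_of_subset {A C : Finset (Fin n)} (hAC : A ⊆ C) {j : ℕ}
    (hjA : j < A.card) (hjC : j < C.card) :
    C.orderEmbOfFin rfl ⟨j, hjC⟩ ≤ A.orderEmbOfFin rfl ⟨j, hjA⟩ := by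
  classical
  by_contra hlt
  push_neg at hlt
  set f := A.orderEmbOfFin rfl with hf
  set g := C.orderEmbOfFin rfl with hg
  set ι : Fin (j + 1) → Fin A.card :=
    fun i => ⟨i.val, lt_of_le_of_lt (Nat.lt_succ_iff.mp i.isLt) hjA⟩ with hι
  have key : ∀ i : Fin (j + 1), ∃ m : Fin C.card, g m = f (ι i) ∧ m.val < j := by
    intro i
    have hfm : f (ι i) ∈ C := hAC (Finset.orderEmbOfFin_mem A rfl _)
    have hrange : f (ι i) ∈ Set.range g := by
      rw [hg, Finset.range_orderEmbOfFin]
      exact hfm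
    obtain ⟨m, hm⟩ := Set.mem_range.mp hrange
    refine ⟨m, hm, ?_⟩
    have h1 : f (ι i) ≤ f ⟨j, hjA⟩ := by
      apply f.monotone
      simp only [hι, Fin.mk_le_mk]
      exact Nat.lt_succ_iff.mp i.isLt
    have h2 : g m < g ⟨j, hjC⟩ := by
      rw [hm]
      exact lt_of_le_of_lt h1 hlt
    have := g.strictMono.lt_iff_lt.mp h2
    simpa [Fin.lt_def] using this
  choose m hm hmlt using key
  have hminj : Function.Injective m := by
    intro a b hab
    have h1 : f (ι a) = f (ι b) := by rw [← hm a, ← hm b, hab]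
    have h2 := f.injective h1
    apply Fin.ext
    simpa [hι, Fin.ext_iff] using h2
  have hcard : Fintype.card (Fin (j + 1)) ≤ Fintype.card (Fin j) :=
    Fintype.card_le_of_injective (fun i => ⟨(m i).val, hmlt i⟩)
      (fun a b hab => hminj (by apply Fin.ext; simpa [Fin.ext_iff] using hab))
  simp at hcard

end UpperAux
section UpperColoring

variable {n : ℕ}

def xIdx (k : ℕ) : ℕ := 2 * 2 ^ (Nat.log 2 k) - k - 1

lemma xIdx_lt {k : ℕ} (hk : 1 ≤ k) : xIdx k < k := by
  have h1 : 2 ^ (Nat.log 2 k) ≤ k := Nat.pow_log_le_self 2 (by omega)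
  unfold xIdx
  omega

def xval (A : Finset (Fin n)) : ℕ :=
  if h : xIdx A.card < A.card then (A.orderEmbOfFin rfl ⟨xIdx A.card, h⟩).val else 0

lemma xval_mem {A : Finset (Fin n)} (hA : A.Nonempty) : ∃ a ∈ A, a.val = xval A := by
  have h : xIdx A.card < A.card := xIdx_lt (Finset.card_pos.mpr hA)
  rw [xval, dif_pos h]
  exact ⟨_, Finset.orderEmbOfFin_mem A rfl _, rfl⟩

lemma xval_lt_n {A : Finset (Fin n)} (hA : A.Nonempty) : xval A < n := by
  obtain ⟨a, _, ha⟩ := xval_mem hA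
  rw [← ha]
  exact a.isLt

lemma xval_lt_xval {A C : Finset (Fin n)} (hAC : A ⊆ C) (hcard : A.card < C.card)
    (hlog : Nat.log 2 A.card = Nat.log 2 C.card) (hA : A.Nonempty) : xval C < xval A := by
  have hk1 : 1 ≤ A.card := Finset.card_pos.mpr hA
  have hs1 : 2 ^ (Nat.log 2 A.card) ≤ A.card := Nat.pow_log_le_self 2 (by omega)
  have hs2 : C.card < 2 * 2 ^ (Nat.log 2 A.card) := by
    have := Nat.lt_pow_succ_log_self (by norm_num : 1 < 2) C.card
    rw [← hlog, pow_succ] at this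
    omega
  have hiA : xIdx A.card < A.card := xIdx_lt hk1
  have hiC : xIdx C.card < C.card := xIdx_lt (by omega)
  have hiAC : xIdx C.card < xIdx A.card := by
    unfold xIdx
    rw [← hlog]
    omega
  have hiA' : xIdx A.card < C.card := by omega
  rw [xval, xval, dif_pos hiA, dif_pos hiC]
  have h1 : C.orderEmbOfFin rfl ⟨xIdx C.card, hiC⟩ < C.orderEmbOfFin rfl ⟨xIdx A.card, hiA'⟩ := by
    apply (C.orderEmbOfFin rfl).strictMono
    simp only [Fin.mk_lt_mk]
    exact hiAC
  have h2 : C.orderEmbOfFin rfl ⟨xIdx A.card, hiA'⟩ ≤ A.orderEmbOfFin rfl ⟨xIdx A.card, hiA⟩ :=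
    nth_le_nth_of_subset hAC hiA hiA'
  exact lt_of_lt_of_le h1 h2

def partColor (n : ℕ) (A : Finset (Fin n)) : ℕ :=
  if 2 * A.card < n then n * Nat.log 2 A.card + xval A + 1 else 0

def colP (P : TKVert n) : ℕ := P.1.sup (partColor n)

lemma colP_eq_of_small {P : TKVert n} {A : Finset (Fin n)} (hA : A ∈ P.1)
    (hs : 2 * A.card < n) : colP P = n * Nat.log 2 A.card + xval A + 1 := by
  classical
  have hPs := parts_structure P hA
  have hcompl : partColor n (Aᶜ : Finset (Fin n)) = 0 := by
    rw [partColor, if_neg]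
    have := card_part_compl hA
    omega
  rw [colP, hPs.1, Finset.sup_insert, Finset.sup_singleton, hcompl, partColor, if_pos hs]
  simp

lemma sup_nat_zero {α : Type*} {S : Finset α} {f : α → ℕ} (h : S.sup f = 0) {a : α}
    (ha : a ∈ S) : f a = 0 :=
  Nat.le_zero.mp (h ▸ Finset.le_sup ha)

lemma colP_zero_balanced {P : TKVert n} (h0 : colP P = 0) {A : Finset (Fin n)}
    (hA : A ∈ P.1) : 2 * A.card = n := by
  classical
  have hsup := sup_nat_zero h0 hA
  have hsup' := sup_nat_zero h0 (parts_structure P hA).2.1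
  rw [partColor] at hsup hsup'
  have hc := card_part_compl hA
  split_ifs at hsup hsup' <;> omega

lemma colP_ne_zero_small {P : TKVert n} (h0 : colP P ≠ 0) :
    ∃ A ∈ P.1, 2 * A.card < n ∧ colP P = n * Nat.log 2 A.card + xval A + 1 := by
  classical
  have : ∃ A ∈ P.1, partColor n A ≠ 0 := by
    by_contra hc
    push_neg at hc
    apply h0
    exact Nat.le_zero.mp (Finset.sup_le fun A hA => Nat.le_zero.mpr (hc A hA))
  obtain ⟨A, hA, hpc⟩ := this
  have hs : 2 * A.card < n := by
    by_contra hs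
    exact hpc (by rw [partColor, if_neg hs])
  exact ⟨A, hA, hs, colP_eq_of_small hA hs⟩

theorem colP_valid {P Q : TKVert n} (h : (KG n).Adj P Q) : colP P ≠ colP Q := by
  classical
  obtain ⟨hPQ, hor⟩ := (show P ≠ Q ∧
    ((∃ A ∈ P.1, ∃ C ∈ Q.1, A ⊆ C) ∨ (∃ C ∈ Q.1, ∃ A ∈ P.1, C ⊆ A)) from h)
  have hcont : ∃ X ∈ P.1, ∃ Y ∈ Q.1, X ⊆ Y ∨ Y ⊆ X := by
    rcases hor with ⟨X, hX, Y, hY, hc⟩ | ⟨Y, hY, X, hX, hc⟩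
    · exact ⟨X, hX, Y, hY, Or.inl hc⟩
    · exact ⟨X, hX, Y, hY, Or.inr hc⟩
  intro heq
  obtain ⟨X, hX, Y, hY, hc⟩ := hcont
  by_cases h0 : colP P = 0
  · have hQ0 : colP Q = 0 := by rw [← heq]; exact h0
    have h2X := colP_zero_balanced h0 hX
    have h2Y := colP_zero_balanced hQ0 hY
    have hXY : X = Y := by
      rcases hc with hc | hc
      · exact Finset.eq_of_subset_of_card_le hc (by omega)
      · exact (Finset.eq_of_subset_of_card_le hc (by omega)).symm
    exact hPQ (parts_eq_of_common hX (hXY ▸ hY))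
  · obtain ⟨A, hA, hsA, hcA⟩ := colP_ne_zero_small h0
    have hQ0 : colP Q ≠ 0 := by rw [← heq]; exact h0
    obtain ⟨C, hC, hsC, hcC⟩ := colP_ne_zero_small hQ0
    have hAne : A.Nonempty := (parts_structure P hA).2.2.1
    have hCne : C.Nonempty := (parts_structure Q hC).2.2.1
    have hxA : xval A < n := xval_lt_n hAne
    have hxC : xval C < n := xval_lt_n hCne
    have hE : n * Nat.log 2 A.card + xval A = n * Nat.log 2 C.card + xval C := by
      have := heq
      rw [hcA, hcC] at this
      omega
    have hl : Nat.log 2 A.card = Nat.log 2 C.card := by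
      rcases Nat.lt_trichotomy (Nat.log 2 A.card) (Nat.log 2 C.card) with hlt | he | hgt
      · exfalso
        have h1 : n * (Nat.log 2 A.card + 1) ≤ n * Nat.log 2 C.card :=
          Nat.mul_le_mul_left n hlt
        rw [Nat.mul_succ] at h1
        omega
      · exact he
      · exfalso
        have h1 : n * (Nat.log 2 C.card + 1) ≤ n * Nat.log 2 A.card :=
          Nat.mul_le_mul_left n hgt
        rw [Nat.mul_succ] at h1
        omega
    have hx : xval A = xval C := by
      rw [hl] at hE
      omega
    -- reduce containment to small parts
    have hPs := parts_structure P hA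
    have hQs := parts_structure Q hC
    have hcCc := card_part_compl hC
    have hcAc := card_part_compl hA
    rw [hPs.1] at hX
    rw [hQs.1] at hY
    simp only [Finset.mem_insert, Finset.mem_singleton] at hX hY
    have key : (A ⊆ C) ∨ (C ⊆ A) ∨ Disjoint A C := by
      rcases hX with rfl | rfl <;> rcases hY with rfl | rfl <;> rcases hc with hc | hc
      · exact Or.inl hc
      · exact Or.inr (Or.inl hc)
      · exact Or.inr (Or.inr (Finset.disjoint_left.mpr
          (fun {a} ha haC => by have := hc ha; rw [Finset.mem_compl] at this; exact this haC)))
      · exact absurd (Finset.card_le_card hc) (by omega)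
      · exact absurd (Finset.card_le_card hc) (by omega)
      · exact Or.inr (Or.inr (Finset.disjoint_left.mpr
          (fun {a} ha hac => by have := hc hac; rw [Finset.mem_compl] at this; exact this ha)))
      · exact Or.inr (Or.inl (Finset.compl_subset_compl.mp hc))
      · exact Or.inl (Finset.compl_subset_compl.mp hc)
    rcases key with hk | hk | hk
    · rcases eq_or_ne A C with rfl | hne
      · exact hPQ (parts_eq_of_common hA hC)
      · have : A.card < C.card := Finset.card_lt_card (Finset.ssubset_iff_subset_ne.mpr ⟨hk, hne⟩)
        have := xval_lt_xval hk this hl hAne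
        omega
    · rcases eq_or_ne C A with rfl | hne
      · exact hPQ (parts_eq_of_common hA hC)
      · have : C.card < A.card := Finset.card_lt_card (Finset.ssubset_iff_subset_ne.mpr ⟨hk, hne⟩)
        have := xval_lt_xval hk this hl.symm hCne
        omega
    · obtain ⟨a, haA, hav⟩ := xval_mem hAne
      obtain ⟨c, hcC, hcv⟩ := xval_mem hCne
      have : a = c := Fin.ext (by rw [hav, hcv, hx])
      exact Finset.disjoint_left.mp hk haA (this ▸ hcC)

lemma colP_lt (P : TKVert n) : colP P < n * (Nat.log 2 n + 1) + 1 := by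
  by_cases h0 : colP P = 0
  · omega
  · obtain ⟨A, hA, hsA, hcA⟩ := colP_ne_zero_small h0
    have hAne : A.Nonempty := (parts_structure P hA).2.2.1
    have hx : xval A < n := xval_lt_n hAne
    have hcard : A.card ≤ n := by
      have := Finset.card_le_univ A
      simpa using this
    have hlog : Nat.log 2 A.card ≤ Nat.log 2 n := Nat.log_mono_right hcard
    have hmul : n * Nat.log 2 A.card ≤ n * Nat.log 2 n := Nat.mul_le_mul_left n hlog
    rw [hcA, Nat.mul_succ]
    omega

theorem KG_colorable (n : ℕ) : (KG n).Colorable (n * (Nat.log 2 n + 1) + 1) := by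
  refine ⟨SimpleGraph.Coloring.mk (fun P => ⟨colP P, colP_lt P⟩) ?_⟩
  intro P Q hadj
  simp only [Fin.mk.injEq, ne_eq]
  exact colP_valid hadj

end UpperColoring
section LowerAux

variable {n : ℕ}

lemma sub_val_self (p : Fin n) : (p - p).val = 0 := by
  rw [finSubVal]; simp

lemma eq_of_sub_val_zero {p x : Fin n} (h : (x - p).val = 0) : x = p := by
  have h1 := p.isLt
  have h2 := x.isLt
  rw [finSubVal] at h
  apply Fin.ext
  split_ifs at h <;> omega

lemma sub_val_add_eq_n {p q : Fin n} (h : p ≠ q) : (q - p).val + (p - q).val = n := by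
  have h1 := p.isLt
  have h2 := q.isLt
  have hne : p.val ≠ q.val := fun hv => h (Fin.ext hv)
  rw [finSubVal, finSubVal]
  split_ifs <;> omega

lemma arcF_compl_eq {p q : Fin n} (h : p ≠ q) : (arcF p q)ᶜ = arcF q p := by
  ext x
  rw [Finset.mem_compl, arcF_compl h]

lemma tkpart_cut {p q : Fin n} (h : p ≠ q) :
    TKPart n {arcF p q, arcF q p} := by
  classical
  have hne : arcF p q ≠ arcF q p := by
    intro he
    have h1 : p ∈ arcF p q := self_mem_arcF h
    have h2 : p ∉ arcF q p := fun hc => ((arcF_compl h).mp hc) h1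
    rw [he] at h1
    exact h2 h1
  refine ⟨?_, ?_, ?_, ?_⟩
  · rw [Finset.card_insert_of_notMem (by simpa using hne), Finset.card_singleton]
  · intro A hA
    rcases Finset.mem_insert.mp hA with rfl | hA
    · exact ⟨p, self_mem_arcF h⟩
    · rw [Finset.mem_singleton.mp hA]
      exact ⟨q, self_mem_arcF h.symm⟩
  · intro A hA B hB hAB
    rcases Finset.mem_insert.mp hA with rfl | hA <;> rcases Finset.mem_insert.mp hB with rfl | hB
    · exact absurd rfl hAB
    · rw [Finset.mem_singleton.mp hB]
      rw [Finset.disjoint_left]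
      exact fun {a} ha hb => ((arcF_compl h).mp hb) ha
    · rw [Finset.mem_singleton.mp hA]
      rw [Finset.disjoint_left]
      exact fun {a} ha hb => ((arcF_compl h).mp ha) hb
    · rw [Finset.mem_singleton.mp hA, Finset.mem_singleton.mp hB] at hAB
      exact absurd rfl hAB
  · rw [Finset.sup_insert, Finset.sup_singleton]
    ext x
    simp only [Finset.mem_union, Finset.sup_eq_union, id, Finset.mem_univ, iff_true]
    by_cases hx : x ∈ arcF p q
    · exact Or.inl hx
    · exact Or.inr ((arcF_compl h).mpr hx)

/-- The `CG`-vertex with cut points `p ≠ q`. -/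
def cutVert {p q : Fin n} (h : p ≠ q) : ↥(CGSet n) :=
  ⟨⟨{arcF p q, arcF q p}, tkpart_cut h⟩, by
    intro A hA
    rcases Finset.mem_insert.mp hA with rfl | hA
    · exact isCyclicInterval_arcF h
    · rw [Finset.mem_singleton.mp hA]
      exact isCyclicInterval_arcF h.symm⟩

lemma exists_cut (hn : 0 < n) (v : ↥(CGSet n)) :
    ∃ p q : Fin n, p ≠ q ∧ v.1.1 = {arcF p q, arcF q p} := by
  have hcard : v.1.1.Nonempty := Finset.card_pos.mp (by rw [v.1.2.1]; norm_num)
  obtain ⟨A, hA⟩ := hcard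
  obtain ⟨p, q, hpq, rfl⟩ := arcF_of_isCyclicInterval hn (v.2 A hA)
  refine ⟨p, q, hpq, ?_⟩
  have := (parts_structure v.1 hA).1
  rw [this, arcF_compl_eq hpq]

lemma arcF_subset_arcF_rev {p q s e : Fin n} (hpq : p ≠ q)
    (hk : (q - p).val ≤ (s - p).val) (hab : (s - p).val < (e - p).val) :
    arcF s e ⊆ arcF q p := by
  intro x hx
  rw [mem_arcF] at hx ⊢
  have h1 := p.isLt
  have h2 := q.isLt
  have h3 := s.isLt
  have h4 := e.isLt
  have h5 := x.isLt
  have hne : p.val ≠ q.val := fun hv => hpq (Fin.ext hv)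
  rw [finSubVal] at hx hk hab ⊢
  rw [finSubVal] at hx hk hab ⊢
  split_ifs at hx hk hab ⊢ <;> omega

/-- Crossing lemma: if neither partition's parts are nested in the other's,
then `u`'s cut has a point in `arcF p q` other than `p`. -/
lemma cross_cut {p q s e : Fin n} (hpq : p ≠ q) (hse : s ≠ e)
    (h1 : ¬ (arcF p q ⊆ arcF s e)) (h2 : ¬ (arcF p q ⊆ arcF e s))
    (h3 : ¬ (arcF s e ⊆ arcF q p)) (h4 : ¬ (arcF e s ⊆ arcF q p)) :
    (s ∈ arcF p q ∧ s ≠ p) ∨ (e ∈ arcF p q ∧ e ≠ p) := by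
  by_contra hcon
  push_neg at hcon
  obtain ⟨hs, he⟩ := hcon
  by_cases hsA : s ∈ arcF p q
  · have hsp : s = p := hs hsA
    by_cases heA : e ∈ arcF p q
    · exact hse (by rw [hsp, he heA])
    · rw [mem_arcF, not_lt] at heA
      rw [hsp] at h1
      exact h1 (arcF_subset_of_same_base heA)
  · by_cases heA : e ∈ arcF p q
    · have hep : e = p := he heA
      rw [mem_arcF, not_lt] at hsA
      rw [hep] at h2
      exact h2 (arcF_subset_of_same_base hsA)
    · rw [mem_arcF, not_lt] at hsA heA
      have hne : (s - p).val ≠ (e - p).val := by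
        intro hv
        apply hse
        have hs' := shift_of_sub_val p s
        have he' := shift_of_sub_val p e
        rw [hv] at hs'
        exact Fin.ext (by rw [hs', he'])
      rcases Nat.lt_or_ge (s - p).val (e - p).val with hab | hab
      · exact h3 (arcF_subset_arcF_rev hpq hsA hab)
      · exact h4 (arcF_subset_arcF_rev hpq heA (by omega))

end LowerAux
section Counting

variable {n : ℕ}

lemma indep_card_le (hn : 0 < n) {S : Finset ↥(CGSet n)}
    (hS : ∀ u ∈ S, ∀ w ∈ S, u ≠ w → ¬ (CG n).Adj u w)
    {v : ↥(CGSet n)} (hv : v ∈ S) {p q : Fin n} (hpq : p ≠ q)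
    (hparts : v.1.1 = {arcF p q, arcF q p}) :
    S.card ≤ (arcF p q).card := by
  classical
  have hApq : arcF p q ∈ v.1.1 := by rw [hparts]; exact Finset.mem_insert_self _ _
  have hAqp : arcF q p ∈ v.1.1 := by
    rw [hparts]; exact Finset.mem_insert_of_mem (Finset.mem_singleton_self _)
  have key : ∀ u ∈ S.erase v, ∃ z : Fin n, (z ∈ arcF p q ∧ z ≠ p) ∧
      ∃ w, z ≠ w ∧ u.1.1 = {arcF z w, arcF w z} := by
    intro u hu
    obtain ⟨huv, huS⟩ := Finset.mem_erase.mp hu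
    obtain ⟨s, e, hse, hpu⟩ := exists_cut hn u
    have hnadj := hS u huS v hv huv
    have hne' : u.1 ≠ v.1 := fun h => huv (Subtype.ext h)
    have hnc : ∀ X ∈ u.1.1, ∀ Y ∈ v.1.1, ¬ X ⊆ Y ∧ ¬ Y ⊆ X := by
      intro X hX Y hY
      constructor
      · intro hc
        exact hnadj (⟨hne', Or.inl ⟨X, hX, Y, hY, hc⟩⟩ : u.1 ≠ v.1 ∧ ((∃ A ∈ u.1.1, ∃ C ∈ v.1.1, A ⊆ C) ∨ (∃ C ∈ v.1.1, ∃ A ∈ u.1.1, C ⊆ A)))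
      · intro hc
        exact hnadj (⟨hne', Or.inr ⟨Y, hY, X, hX, hc⟩⟩ : u.1 ≠ v.1 ∧ ((∃ A ∈ u.1.1, ∃ C ∈ v.1.1, A ⊆ C) ∨ (∃ C ∈ v.1.1, ∃ A ∈ u.1.1, C ⊆ A)))
    have hse_mem : arcF s e ∈ u.1.1 := by rw [hpu]; exact Finset.mem_insert_self _ _
    have hes_mem : arcF e s ∈ u.1.1 := by
      rw [hpu]; exact Finset.mem_insert_of_mem (Finset.mem_singleton_self _)
    rcases cross_cut hpq hse
        ((hnc _ hse_mem _ hApq).2) ((hnc _ hes_mem _ hApq).2)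
        ((hnc _ hse_mem _ hAqp).1) ((hnc _ hes_mem _ hAqp).1) with hz | hz
    · exact ⟨s, hz, e, hse, hpu⟩
    · exact ⟨e, hz, s, hse.symm, by rw [hpu]; exact Finset.pair_comm _ _⟩
  have key' : ∀ u : ↥(CGSet n), ∃ z : Fin n, u ∈ S.erase v →
      (z ∈ arcF p q ∧ z ≠ p) ∧ ∃ w, z ≠ w ∧ u.1.1 = {arcF z w, arcF w z} := by
    intro u
    by_cases hu : u ∈ S.erase v
    · obtain ⟨z, h1, h2⟩ := key u hu
      exact ⟨z, fun _ => ⟨h1, h2⟩⟩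
    · exact ⟨p, fun h => absurd h hu⟩
  choose f hf using key'
  have hmaps : ∀ u ∈ S.erase v, f u ∈ (arcF p q).erase p := by
    intro u hu
    exact Finset.mem_erase.mpr ⟨((hf u hu).1).2, ((hf u hu).1).1⟩
  have hinj : Set.InjOn f ↑(S.erase v) := by
    intro u hu u' hu' hff
    rw [Finset.mem_coe] at hu hu'
    by_contra hne
    obtain ⟨w, hzw, hw⟩ := (hf u hu).2
    obtain ⟨w', hzw', hw'⟩ := (hf u' hu').2
    rw [hff] at hw
    set z := f u' with hz
    have hmem1 : arcF z w ∈ u.1.1 := by rw [hw]; exact Finset.mem_insert_self _ _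
    have hmem2 : arcF z w' ∈ u'.1.1 := by rw [hw']; exact Finset.mem_insert_self _ _
    have hne1 : u.1 ≠ u'.1 := fun h => hne (Subtype.ext h)
    have huS := (Finset.mem_erase.mp hu).2
    have huS' := (Finset.mem_erase.mp hu').2
    rcases le_total ((w - z).val) ((w' - z).val) with hle | hle
    · exact hS u huS u' huS' hne
        (⟨hne1, Or.inl ⟨arcF z w, hmem1, arcF z w', hmem2, arcF_subset_of_same_base hle⟩⟩ :
          u.1 ≠ u'.1 ∧ ((∃ A ∈ u.1.1, ∃ C ∈ u'.1.1, A ⊆ C) ∨ (∃ C ∈ u'.1.1, ∃ A ∈ u.1.1, C ⊆ A)))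
    · exact hS u huS u' huS' hne
        (⟨hne1, Or.inr ⟨arcF z w', hmem2, arcF z w, hmem1, arcF_subset_of_same_base hle⟩⟩ :
          u.1 ≠ u'.1 ∧ ((∃ A ∈ u.1.1, ∃ C ∈ u'.1.1, A ⊆ C) ∨ (∃ C ∈ u'.1.1, ∃ A ∈ u.1.1, C ⊆ A)))
  have hcard1 : (S.erase v).card ≤ ((arcF p q).erase p).card :=
    Finset.card_le_card_of_injOn f hmaps hinj
  have h2 : (S.erase v).card + 1 = S.card := Finset.card_erase_add_one hv
  have h3 : ((arcF p q).erase p).card = (arcF p q).card - 1 :=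
    Finset.card_erase_of_mem (self_mem_arcF hpq)
  have h4 : 0 < (arcF p q).card := Finset.card_pos.mpr ⟨p, self_mem_arcF hpq⟩
  omega

end Counting
section LowerBound

variable {n : ℕ}

lemma nonempty_parts (v : TKVert n) : v.1.Nonempty :=
  Finset.card_pos.mp (by rw [v.2.1]; norm_num)

noncomputable def lenMin (v : TKVert n) : ℕ := v.1.inf' (nonempty_parts v) Finset.card

lemma lenMin_le {v : TKVert n} {X : Finset (Fin n)} (hX : X ∈ v.1) :
    lenMin v ≤ X.card := Finset.inf'_le _ hX

lemma le_lenMin {v : TKVert n} {m : ℕ} (h : ∀ X ∈ v.1, m ≤ X.card) :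
    m ≤ lenMin v := Finset.le_inf' _ _ h

lemma lenMin_pos (v : TKVert n) : 0 < lenMin v :=
  le_lenMin (fun X hX => Finset.card_pos.mpr (v.2.2.1 X hX))

lemma cutVert_parts {p q : Fin n} (h : p ≠ q) :
    (cutVert (n := n) h).1.1 = {arcF p q, arcF q p} := rfl

lemma lenMin_cutVert {p q : Fin n} (h : p ≠ q) (hhalf : 2 * (q - p).val ≤ n) :
    lenMin (cutVert h).1 = (q - p).val := by
  classical
  have hsum := sub_val_add_eq_n h
  apply le_antisymm
  · have : arcF p q ∈ (cutVert (n := n) h).1.1 := by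
      rw [cutVert_parts]; exact Finset.mem_insert_self _ _
    have h2 := lenMin_le this
    rwa [card_arcF] at h2
  · apply le_lenMin
    intro X hX
    rw [cutVert_parts] at hX
    rcases Finset.mem_insert.mp hX with rfl | hX
    · rw [card_arcF]
    · rw [Finset.mem_singleton.mp hX, card_arcF]
      omega

open Fin.NatCast in
lemma CG_harmonic_le_colors (hn : 3 ≤ n) {m : ℕ} (hcol : (CG n).Colorable m) :
    (n : ℝ) * ((harmonic ((n - 1) / 2) : ℚ) : ℝ) ≤ m := by
  classical
  haveI : NeZero n := ⟨by omega⟩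
  letI : Fintype ↥(CGSet n) := Fintype.ofFinite _
  obtain ⟨C⟩ := hcol
  set M := (n - 1) / 2 with hM
  have hnpos : 0 < n := by omega
  -- Step A: per-fiber weight at most 1
  have stepA : ∀ c : Fin m,
      ∑ v ∈ Finset.univ.filter (fun v => C v = c), (1 / (lenMin v.1 : ℝ)) ≤ 1 := by
    intro c
    set S := Finset.univ.filter (fun v : ↥(CGSet n) => C v = c) with hS
    rcases S.eq_empty_or_nonempty with he | hne
    · rw [he]; simp
    · have hSind : ∀ u ∈ S, ∀ w ∈ S, u ≠ w → ¬ (CG n).Adj u w := by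
        intro u hu w hw hne hadj
        have hcv := C.valid hadj
        rw [hS, Finset.mem_filter] at hu hw
        rw [hu.2, hw.2] at hcv
        exact hcv rfl
      have hlen : ∀ v ∈ S, (S.card : ℝ) ≤ (lenMin v.1 : ℝ) := by
        intro v hv
        have hle : S.card ≤ lenMin v.1 := by
          apply le_lenMin
          intro X hX
          obtain ⟨p, q, hpq, hparts⟩ := exists_cut hnpos v
          rw [hparts] at hX
          rcases Finset.mem_insert.mp hX with rfl | hX
          · exact indep_card_le hnpos hSind hv hpq hparts
          · rw [Finset.mem_singleton.mp hX]
            exact indep_card_le hnpos hSind hv hpq.symm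
              (by rw [hparts]; exact Finset.pair_comm _ _)
        exact_mod_cast hle
      have hpos : (0 : ℝ) < (S.card : ℝ) := by
        have := Finset.card_pos.mpr hne
        exact_mod_cast this
      calc ∑ v ∈ S, 1 / (lenMin v.1 : ℝ)
          ≤ ∑ v ∈ S, 1 / (S.card : ℝ) :=
            Finset.sum_le_sum (fun v hv => one_div_le_one_div_of_le hpos (hlen v hv))
        _ = (S.card : ℝ) * (1 / (S.card : ℝ)) := by
            rw [Finset.sum_const, nsmul_eq_mul]
        _ = 1 := by field_simp
  -- Step B: total weight at most m
  have stepB : ∑ v : ↥(CGSet n), (1 / (lenMin v.1 : ℝ)) ≤ (m : ℝ) := by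
    rw [← Finset.sum_fiberwise Finset.univ (fun v => C v) (fun v => 1 / (lenMin v.1 : ℝ))]
    calc ∑ c : Fin m, ∑ v ∈ Finset.univ.filter (fun v => C v = c), (1 / (lenMin v.1 : ℝ))
        ≤ ∑ _c : Fin m, (1 : ℝ) := Finset.sum_le_sum (fun c _ => stepA c)
      _ = m := by simp
  -- Step C: total weight at least n * harmonic M
  have hd0 : ∀ d : ℕ, 1 ≤ d → d ≤ M → ((d : Fin n) : ℕ) = d := by
    intro d h1 h2
    rw [Fin.val_natCast, Nat.mod_eq_of_lt (by omega)]
  have hne01 : (0 : Fin n) ≠ (1 : Fin n) := by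
    intro h01
    have := congrArg Fin.val h01
    rw [Fin.val_zero, Fin.val_one'] at this
    rw [Nat.mod_eq_of_lt (by omega)] at this
    omega
  set G : Fin n × ℕ → ↥(CGSet n) := fun pd =>
    if h : pd.1 ≠ pd.1 + (pd.2 : Fin n) then cutVert h else cutVert hne01 with hG
  set T : Finset (Fin n × ℕ) := Finset.univ ×ˢ Finset.Icc 1 M with hT
  have hMem : ∀ pd ∈ T, 1 ≤ pd.2 ∧ pd.2 ≤ M := by
    intro pd hpd
    rw [hT, Finset.mem_product, Finset.mem_Icc] at hpd
    exact hpd.2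
  have hGne : ∀ pd ∈ T, pd.1 ≠ pd.1 + (pd.2 : Fin n) := by
    intro pd hpd
    obtain ⟨h1, h2⟩ := hMem pd hpd
    intro heq
    have := left_eq_add.mp heq
    have hval := congrArg Fin.val this
    rw [hd0 pd.2 h1 h2, Fin.val_zero] at hval
    omega
  have hsubval : ∀ pd ∈ T, ((pd.1 + (pd.2 : Fin n)) - pd.1).val = pd.2 := by
    intro pd hpd
    obtain ⟨h1, h2⟩ := hMem pd hpd
    rw [add_sub_cancel_left, hd0 pd.2 h1 h2]
  have hGval : ∀ pd ∈ T, lenMin (G pd).1 = pd.2 := by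
    intro pd hpd
    obtain ⟨h1, h2⟩ := hMem pd hpd
    rw [hG]
    simp only [dif_pos (hGne pd hpd)]
    rw [lenMin_cutVert (hGne pd hpd) (by rw [hsubval pd hpd]; omega), hsubval pd hpd]
  have hGparts : ∀ pd ∈ T, (G pd).1.1 =
      {arcF pd.1 (pd.1 + (pd.2 : Fin n)), arcF (pd.1 + (pd.2 : Fin n)) pd.1} := by
    intro pd hpd
    rw [hG]
    simp only [dif_pos (hGne pd hpd)]
    rfl
  have hGinj : Set.InjOn G ↑T := by
    intro pd hpd pd' hpd' hGG
    rw [Finset.mem_coe] at hpd hpd'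
    obtain ⟨h1, h2⟩ := hMem pd hpd
    obtain ⟨h1', h2'⟩ := hMem pd' hpd'
    have hpq : pd.1 ≠ pd.1 + (pd.2 : Fin n) := hGne pd hpd
    have hpq' : pd'.1 ≠ pd'.1 + (pd'.2 : Fin n) := hGne pd' hpd'
    have hsv : ((pd.1 + (pd.2 : Fin n)) - pd.1).val = pd.2 := hsubval pd hpd
    have hsv' : ((pd'.1 + (pd'.2 : Fin n)) - pd'.1).val = pd'.2 := hsubval pd' hpd'
    have hparts : ({arcF pd.1 (pd.1 + (pd.2 : Fin n)), arcF (pd.1 + (pd.2 : Fin n)) pd.1}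
        : Finset (Finset (Fin n)))
        = {arcF pd'.1 (pd'.1 + (pd'.2 : Fin n)), arcF (pd'.1 + (pd'.2 : Fin n)) pd'.1} := by
      rw [← hGparts pd hpd, ← hGparts pd' hpd', hGG]
    have hmem : arcF pd.1 (pd.1 + (pd.2 : Fin n)) ∈
        ({arcF pd'.1 (pd'.1 + (pd'.2 : Fin n)), arcF (pd'.1 + (pd'.2 : Fin n)) pd'.1}
          : Finset (Finset (Fin n))) := by
      rw [← hparts]; exact Finset.mem_insert_self _ _
    have hcard_pq : (arcF pd.1 (pd.1 + (pd.2 : Fin n))).card = pd.2 := by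
      rw [card_arcF, hsv]
    have hcard_pq' : (arcF pd'.1 (pd'.1 + (pd'.2 : Fin n))).card = pd'.2 := by
      rw [card_arcF, hsv']
    have hsum' : ((pd'.1 + (pd'.2 : Fin n)) - pd'.1).val
        + (pd'.1 - (pd'.1 + (pd'.2 : Fin n))).val = n := sub_val_add_eq_n hpq'
    have hcard_qp' : (arcF (pd'.1 + (pd'.2 : Fin n)) pd'.1).card = n - pd'.2 := by
      rw [card_arcF]
      omega
    have hMn : 2 * M ≤ n - 1 := by omega
    rcases Finset.mem_insert.mp hmem with heq | heq
    · have hdeq : pd.2 = pd'.2 := by rw [← hcard_pq, heq, hcard_pq']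
      have hpe : pd.1 = pd'.1 := by
        by_contra hpe
        have hp'mem : pd'.1 ∈ arcF pd.1 (pd.1 + (pd.2 : Fin n)) := by
          rw [heq]; exact self_mem_arcF hpq'
        have hpmem : pd.1 ∈ arcF pd'.1 (pd'.1 + (pd'.2 : Fin n)) := by
          rw [← heq]; exact self_mem_arcF hpq
        rw [mem_arcF] at hp'mem hpmem
        rw [hsv] at hp'mem
        rw [hsv'] at hpmem
        have hnn := sub_val_add_eq_n (show pd.1 ≠ pd'.1 from hpe)
        omega
      exact Prod.ext hpe hdeq
    · exfalso
      have heq2 : pd.2 = n - pd'.2 := by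
        rw [← hcard_pq, Finset.mem_singleton.mp heq, hcard_qp']
      omega
  -- sum over image
  have hwt_nonneg : ∀ v : ↥(CGSet n), 0 ≤ 1 / (lenMin v.1 : ℝ) := by
    intro v
    positivity
  have hsi : ∑ v ∈ T.image G, (1 / (lenMin v.1 : ℝ))
      = ∑ pd ∈ T, (1 / (lenMin (G pd).1 : ℝ)) :=
    Finset.sum_image (fun x hx y hy hxy => hGinj hx hy hxy)
  have himage : ∑ pd ∈ T, (1 / (lenMin (G pd).1 : ℝ)) ≤ ∑ v : ↥(CGSet n), (1 / (lenMin v.1 : ℝ)) := by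
    rw [← hsi]
    exact Finset.sum_le_sum_of_subset_of_nonneg (Finset.subset_univ _)
      (fun v _ _ => hwt_nonneg v)
  have hTsum : ∑ pd ∈ T, (1 / (lenMin (G pd).1 : ℝ)) = (n : ℝ) * ((harmonic M : ℚ) : ℝ) := by
    rw [Finset.sum_congr rfl (fun pd hpd => by rw [hGval pd hpd])]
    rw [hT, Finset.sum_product]
    have hinner : ∀ p : Fin n, ∑ d ∈ Finset.Icc 1 M, (1 / (d : ℝ)) = ((harmonic M : ℚ) : ℝ) := by
      intro p
      rw [harmonic_eq_sum_Icc]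
      push_cast
      apply Finset.sum_congr rfl
      intro d _
      rw [one_div]
    rw [Finset.sum_congr rfl (fun p _ => hinner p), Finset.sum_const, nsmul_eq_mul]
    simp
  calc (n : ℝ) * ((harmonic M : ℚ) : ℝ) = ∑ pd ∈ T, (1 / (lenMin (G pd).1 : ℝ)) := hTsum.symm
    _ ≤ ∑ v : ↥(CGSet n), (1 / (lenMin v.1 : ℝ)) := himage
    _ ≤ m := stepB

end LowerBound
section Final

open SimpleGraph

lemma CG_colorable_of_KG {n m : ℕ} (h : (KG n).Colorable m) : (CG n).Colorable m := by
  obtain ⟨C⟩ := h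
  exact ⟨SimpleGraph.Coloring.mk (fun v => C v.1) (fun hadj => C.valid hadj)⟩

/-- The chromatic numbers of `CG(n)` and `KG(n)` are both `Θ(n log n)`. -/
theorem chromatic_CG_KG_theta :
    ∃ c C : ℝ, 0 < c ∧ 0 < C ∧ ∀ n : ℕ, 3 ≤ n →
      ∃ a b : ℕ, (CG n).chromaticNumber = a ∧ (KG n).chromaticNumber = b ∧
        c * n * Real.log n ≤ (a : ℝ) ∧ a ≤ b ∧ (b : ℝ) ≤ C * n * Real.log n := by
  classical
  refine ⟨1/4, 4, by norm_num, by norm_num, ?_⟩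
  intro n hn
  haveI : NeZero n := ⟨by omega⟩
  have hnR : (3 : ℝ) ≤ (n : ℝ) := by exact_mod_cast hn
  have hnpos : (0 : ℝ) < (n : ℝ) := by linarith
  have hlog3 : (1 : ℝ) < Real.log 3 := by
    rw [Real.lt_log_iff_exp_lt (by norm_num)]
    calc Real.exp 1 < 2.7182818286 := Real.exp_one_lt_d9
      _ < 3 := by norm_num
  have hlogn1 : (1 : ℝ) ≤ Real.log n :=
    le_of_lt (lt_of_lt_of_le hlog3 (Real.log_le_log (by norm_num) hnR))
  have hlognpos : (0 : ℝ) < Real.log n := by linarith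
  set N := n * (Nat.log 2 n + 1) + 1 with hN
  have hKGcol : (KG n).Colorable N := KG_colorable n
  have hKGne : (KG n).chromaticNumber ≠ ⊤ :=
    SimpleGraph.chromaticNumber_ne_top_iff_exists.mpr ⟨_, hKGcol⟩
  have hCGcol : (CG n).Colorable N := CG_colorable_of_KG hKGcol
  have hCGne : (CG n).chromaticNumber ≠ ⊤ :=
    SimpleGraph.chromaticNumber_ne_top_iff_exists.mpr ⟨_, hCGcol⟩
  set a := (CG n).chromaticNumber.toNat with ha'
  set b := (KG n).chromaticNumber.toNat with hb'
  have ha : (CG n).chromaticNumber = a := (ENat.coe_toNat hCGne).symm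
  have hb : (KG n).chromaticNumber = b := (ENat.coe_toNat hKGne).symm
  refine ⟨a, b, ha, hb, ?_, ?_, ?_⟩
  · -- lower bound
    have hacol : (CG n).Colorable a := SimpleGraph.colorable_of_chromaticNumber_ne_top hCGne
    have hharm := CG_harmonic_le_colors hn hacol
    set M := (n - 1) / 2 with hM
    have hM2 : n ≤ 2 * (M + 1) := by omega
    have hM2R : (n : ℝ) / 2 ≤ (M : ℝ) + 1 := by
      have : (n : ℝ) ≤ 2 * ((M : ℝ) + 1) := by exact_mod_cast hM2
      linarith
    have hlogM : Real.log ((n : ℝ) / 2) ≤ ((harmonic M : ℚ) : ℝ) := by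
      calc Real.log ((n : ℝ) / 2) ≤ Real.log ((M : ℝ) + 1) :=
            Real.log_le_log (by linarith) hM2R
        _ = Real.log ((M + 1 : ℕ) : ℝ) := by push_cast; ring_nf
        _ ≤ ((harmonic M : ℚ) : ℝ) := log_add_one_le_harmonic M
    have hlogdiv : Real.log ((n : ℝ) / 2) = Real.log n - Real.log 2 :=
      Real.log_div (ne_of_gt hnpos) (by norm_num)
    -- (3/4) log n ≥ log 2  since  3 log 3 = log 27 ≥ log 16 = 4 log 2
    have h27 : (4 : ℝ) * Real.log 2 ≤ 3 * Real.log 3 := by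
      have h16 : (4 : ℝ) * Real.log 2 = Real.log 16 := by
        rw [show (16 : ℝ) = 2 ^ (4 : ℕ) by norm_num, Real.log_pow]
        push_cast; ring
      have h27' : (3 : ℝ) * Real.log 3 = Real.log 27 := by
        rw [show (27 : ℝ) = 3 ^ (3 : ℕ) by norm_num, Real.log_pow]
        push_cast; ring
      rw [h16, h27']
      exact Real.log_le_log (by norm_num) (by norm_num)
    have hlog2_le : Real.log 2 ≤ (3 / 4) * Real.log n := by
      have h3n : Real.log 3 ≤ Real.log n := Real.log_le_log (by norm_num) hnR
      nlinarith
    have hquarter : (1 / 4 : ℝ) * Real.log n ≤ Real.log n - Real.log 2 := by linarith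
    calc (1 / 4 : ℝ) * n * Real.log n = (n : ℝ) * ((1 / 4 : ℝ) * Real.log n) := by ring
      _ ≤ (n : ℝ) * (Real.log n - Real.log 2) := by
          apply mul_le_mul_of_nonneg_left hquarter (le_of_lt hnpos)
      _ = (n : ℝ) * Real.log ((n : ℝ) / 2) := by rw [hlogdiv]
      _ ≤ (n : ℝ) * ((harmonic M : ℚ) : ℝ) := by
          apply mul_le_mul_of_nonneg_left hlogM (le_of_lt hnpos)
      _ ≤ (a : ℝ) := hharm
  · -- a ≤ b
    have hble : (CG n).chromaticNumber ≤ (KG n).chromaticNumber := by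
      rw [hb]
      exact SimpleGraph.Colorable.chromaticNumber_le
        (CG_colorable_of_KG (SimpleGraph.colorable_of_chromaticNumber_ne_top hKGne))
    exact ENat.toNat_le_toNat hble hKGne
  · -- upper bound
    have hbN : b ≤ N := by
      have h1 : (KG n).chromaticNumber ≤ (N : ℕ∞) := hKGcol.chromaticNumber_le
      have := ENat.toNat_le_toNat h1 (by simp)
      simpa using this
    have hbNR : (b : ℝ) ≤ (N : ℝ) := by exact_mod_cast hbN
    have hL : (Nat.log 2 n : ℝ) ≤ 2 * Real.log n := by
      have hpow : (2 : ℝ) ^ (Nat.log 2 n) ≤ (n : ℝ) := by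
        exact_mod_cast Nat.pow_log_le_self 2 (by omega : n ≠ 0)
      have hlogle : (Nat.log 2 n : ℝ) * Real.log 2 ≤ Real.log n := by
        rw [← Real.log_pow]
        exact Real.log_le_log (by positivity) hpow
      have hlog2half : (1 / 2 : ℝ) ≤ Real.log 2 := by
        have := Real.log_two_gt_d9
        linarith
      nlinarith [Nat.cast_nonneg (α := ℝ) (Nat.log 2 n)]
    have hNR : (N : ℝ) = (n : ℝ) * ((Nat.log 2 n : ℝ) + 1) + 1 := by
      rw [hN]; push_cast; ring
    calc (b : ℝ) ≤ (N : ℝ) := hbNR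
      _ = (n : ℝ) * ((Nat.log 2 n : ℝ) + 1) + 1 := hNR
      _ ≤ (n : ℝ) * (2 * Real.log n + 1) + 1 := by nlinarith
      _ ≤ 4 * n * Real.log n := by nlinarith

end Final
end

section
/- For every integer n ≥ 2, the chromatic number of the total Kneser graph satisfies χ(KG(n)) ≥ n·H_{⌊(n−1)/2⌋} + (1 − p(n)), where the chromatic number is interpreted as a real number on the left-hand side. -/
set_option linter.unusedSectionVars false
set_option maxHeartbeats 1000000


open Finset
open Fin.NatCast

section Arc
variable {n : ℕ} [NeZero n]

/-- offset of `x` from `j` around the cycle `Fin n`. -/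
def off (j x : Fin n) : ℕ := (x.val + n - j.val) % n

lemma off_spec (j x : Fin n) :
    off j x = if j.val ≤ x.val then x.val - j.val else x.val + n - j.val := by
  have hn : 0 < n := Fin.pos j
  have hj := j.isLt
  have hx := x.isLt
  unfold off
  split
  · have : x.val + n - j.val = (x.val - j.val) + n := by omega
    rw [this, Nat.add_mod_right, Nat.mod_eq_of_lt (by omega)]
  · rw [Nat.mod_eq_of_lt (by omega)]

lemma off_lt (j x : Fin n) : off j x < n := Nat.mod_lt _ (Fin.pos j)

lemma off_self (j : Fin n) : off j j = 0 := by simp [off_spec]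

lemma off_eq_zero_iff {j x : Fin n} : off j x = 0 ↔ x = j := by
  rw [off_spec]
  constructor
  · intro h
    have hj := j.isLt; have hx := x.isLt
    apply Fin.ext
    split at h <;> omega
  · rintro rfl; simp

lemma off_antisymm {j x : Fin n} (h : x ≠ j) : off j x + off x j = n := by
  have hj := j.isLt; have hx := x.isLt
  have : x.val ≠ j.val := fun hv => h (Fin.ext hv)
  rw [off_spec, off_spec]
  split <;> split <;> omega

lemma off_inj {j x y : Fin n} (h : off j x = off j y) : x = y := by
  have hj := j.isLt; have hx := x.isLt; have hy := y.isLt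
  rw [off_spec, off_spec] at h
  apply Fin.ext
  split at h <;> split at h <;> omega

lemma off_rebase (j s z : Fin n) :
    off s z = if off j s ≤ off j z then off j z - off j s else off j z + n - off j s := by
  have hj := j.isLt; have hs := s.isLt; have hz := z.isLt
  rw [off_spec, off_spec, off_spec]
  split_ifs <;> omega

lemma val_add_spec (j i : Fin n) :
    (j + i).val = if j.val + i.val < n then j.val + i.val else j.val + i.val - n := by
  have hj := j.isLt; have hi := i.isLt
  rw [Fin.val_add]
  split
  · exact Nat.mod_eq_of_lt (by omega)
  · rw [Nat.mod_eq_sub_mod (by omega), Nat.mod_eq_of_lt (by omega)]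

lemma val_natCast_lt {l : ℕ} (hl : l < n) : ((l : Fin n)).val = l := by
  simp [Fin.val_natCast, Nat.mod_eq_of_lt hl]

/-- `off j (s + l)` for a natural shift `l < n`. -/
lemma off_add_nat (j s : Fin n) {l : ℕ} (hl : l < n) :
    off j (s + (l : Fin n)) = if off j s + l < n then off j s + l else off j s + l - n := by
  have hj := j.isLt; have hs := s.isLt
  have h1 : (s + (l : Fin n)).val = if s.val + l < n then s.val + l else s.val + l - n := by
    rw [val_add_spec, val_natCast_lt hl]
  rw [off_spec, off_spec, h1]
  split_ifs <;> omega

end Arc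

section ArcSet
variable {n : ℕ} [NeZero n]

/-- The arc of length `k` starting at `j` in the cycle `Fin n`. -/
def arc (j : Fin n) (k : ℕ) : Finset (Fin n) := Finset.univ.filter (fun x => off j x < k)

lemma mem_arc {j x : Fin n} {k : ℕ} : x ∈ arc j k ↔ off j x < k := by simp [arc]

lemma self_mem_arc {j : Fin n} {k : ℕ} (hk : 1 ≤ k) : j ∈ arc j k := by
  simp [mem_arc, off_self]; omega

lemma card_filter_val_lt {k : ℕ} (hk : k ≤ n) :
    (Finset.univ.filter (fun x : Fin n => x.val < k)).card = k := by
  rw [show Finset.univ.filter (fun x : Fin n => x.val < k)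
      = Finset.map (Fin.castLEEmb hk) Finset.univ from ?_]
  · simp
  · ext x
    simp only [Finset.mem_filter, Finset.mem_univ, true_and, Finset.mem_map]
    constructor
    · intro hx
      exact ⟨⟨x.val, hx⟩, by simp [Fin.castLEEmb, Fin.castLE]⟩
    · rintro ⟨y, -, rfl⟩
      simp only [Fin.castLEEmb, Fin.coe_castLE]
      exact y.isLt

lemma arc_eq_image (j : Fin n) (k : ℕ) :
    arc j k = Finset.image (fun i => j + i) (Finset.univ.filter (fun i : Fin n => i.val < k)) := by
  ext x
  simp only [mem_arc, Finset.mem_image, Finset.mem_filter, Finset.mem_univ, true_and]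
  constructor
  · intro hx
    have hcast : ((off j x : ℕ) : Fin n).val = off j x := val_natCast_lt (off_lt j x)
    refine ⟨((off j x : ℕ) : Fin n), by rw [hcast]; exact hx, ?_⟩
    apply off_inj (j := j)
    rw [show ((off j x : ℕ) : Fin n) = (( ((off j x : ℕ) : Fin n).val : ℕ) : Fin n) by
      rw [hcast], hcast, off_add_nat j j (l := off j x) (off_lt j x)]
    simp [off_self]
    omega
  · rintro ⟨i, hi, rfl⟩
    have hin := i.isLt
    have : (i.val : Fin n) = i := by
      apply Fin.ext; rw [val_natCast_lt hin]
    rw [← this, off_add_nat j j (l := i.val) hin]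
    simp [off_self]
    omega

lemma card_arc (j : Fin n) {k : ℕ} (hk : k ≤ n) : (arc j k).card = k := by
  rw [arc_eq_image, Finset.card_image_of_injective _ (add_right_injective j),
    card_filter_val_lt hk]

/-- subsets with the same start -/
lemma arc_subset_arc_left {j : Fin n} {k l : ℕ} (h : k ≤ l) : arc j k ⊆ arc j l := by
  intro x; rw [mem_arc, mem_arc]; omega

/-- membership in terms of the end point -/
lemma mem_arc_end {s z : Fin n} {l : ℕ} (h1 : 1 ≤ l) (h2 : l < n) :
    z ∈ arc s l ↔ 1 ≤ off z (s + (l : Fin n)) ∧ off z (s + (l : Fin n)) ≤ l := by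
  have he : off s (s + (l : Fin n)) = l := by
    rw [off_add_nat s s h2]; simp [off_self]; omega
  have hr := off_rebase s z (s + (l : Fin n))
  rw [he] at hr
  have hz := off_lt s z
  rw [mem_arc, hr]
  split_ifs <;> omega

/-- arcs with the same end point, shorter contained in longer -/
lemma arc_subset_arc_end {s s' : Fin n} {l l' : ℕ} (h1 : 1 ≤ l) (h2 : l ≤ l') (h3 : l' < n)
    (he : s + (l : Fin n) = s' + (l' : Fin n)) : arc s l ⊆ arc s' l' := by
  intro z hz
  rw [mem_arc_end h1 (lt_of_le_of_lt h2 h3)] at hz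
  rw [mem_arc_end (le_trans h1 h2) h3, ← he]
  omega

end ArcSet

section Cycle
variable {n : ℕ} [NeZero n]

lemma cycle_lemma (F : Finset (ℕ × Fin n))
    (hsz : ∀ x ∈ F, 1 ≤ x.1 ∧ 2 * x.1 ≤ n)
    (hpair : ∀ x ∈ F, ∀ y ∈ F, x ≠ y →
      ¬ (arc x.2 x.1 ⊆ arc y.2 y.1) ∧ (arc x.2 x.1 ∩ arc y.2 y.1).Nonempty) :
    ∑ x ∈ F, ((x.1 : ℚ))⁻¹ ≤ 1 := by
  classical
  rcases F.eq_empty_or_nonempty with rfl | hne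
  · simp
  obtain ⟨x₀, hx₀F, hmin⟩ := F.exists_min_image Prod.fst hne
  set a := x₀.1 with ha_def
  set j₀ := x₀.2 with hj₀_def
  obtain ⟨ha1, ha2⟩ := hsz x₀ hx₀F
  have han : a < n := by omega
  -- classification claim
  have claim : ∀ y ∈ F, y ≠ x₀ →
      (1 ≤ off j₀ y.2 ∧ off j₀ y.2 < a) ∨
      (¬ (1 ≤ off j₀ y.2 ∧ off j₀ y.2 < a) ∧
        1 ≤ off j₀ (y.2 + (y.1 : Fin n)) ∧ off j₀ (y.2 + (y.1 : Fin n)) < a) := by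
    intro y hyF hy
    obtain ⟨hl1, hl2⟩ := hsz y hyF
    have hal : a ≤ y.1 := hmin y hyF
    have hln : y.1 < n := by omega
    set l := y.1
    set s := y.2
    set u := off j₀ s with hu_def
    have hu_lt : u < n := off_lt _ _
    have hu0 : u ≠ 0 := by
      intro h0
      have hs : s = j₀ := off_eq_zero_iff.mp h0
      have : arc j₀ a ⊆ arc s l := by rw [hs]; exact arc_subset_arc_left hal
      exact (hpair x₀ hx₀F y hyF (fun h => hy h.symm)).1 this
    by_cases hcase : u < a
    · left; omega
    · right
      push_neg at hcase
      refine ⟨by omega, ?_⟩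
      -- use a point in the intersection
      obtain ⟨z, hz⟩ := (hpair y hyF x₀ hx₀F hy).2
      rw [Finset.mem_inter, mem_arc, mem_arc] at hz
      obtain ⟨hz1', hz2'⟩ := hz
      have hz1 : off s z < l := hz1'
      have hz2 : off j₀ z < a := hz2'
      have hreb := off_rebase j₀ s z
      rw [← hu_def] at hreb
      have hzu : ¬ (u ≤ off j₀ z) := by omega
      rw [if_neg hzu] at hreb
      have hul : n < u + l := by omega
      have hw : off j₀ (s + (l : Fin n)) = u + l - n := by
        rw [off_add_nat j₀ s hln, ← hu_def, if_neg (by omega)]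
      rw [hw]
      constructor
      · omega
      · by_contra hwa
        push_neg at hwa
        have hsub : arc j₀ a ⊆ arc s l := by
          intro z' hz'
          rw [mem_arc] at hz' ⊢
          have hreb' := off_rebase j₀ s z'
          rw [← hu_def, if_neg (by omega)] at hreb'
          omega
        exact (hpair x₀ hx₀F y hyF (fun h => hy h.symm)).1 hsub
  -- the injection into arc j₀ a
  set Φ : ℕ × Fin n → Fin n := fun y =>
    if y = x₀ then j₀ else
    if 1 ≤ off j₀ y.2 ∧ off j₀ y.2 < a then y.2 else y.2 + (y.1 : Fin n) with hΦ_def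
  have hΦoff : ∀ y ∈ F, y ≠ x₀ → 1 ≤ off j₀ (Φ y) ∧ off j₀ (Φ y) < a := by
    intro y hyF hy
    rcases claim y hyF hy with h | ⟨hc, h1, h2⟩
    · simp only [hΦ_def, if_neg hy, if_pos h]; exact h
    · simp only [hΦ_def, if_neg hy, if_neg hc]; exact ⟨h1, h2⟩
  have hmaps : ∀ y ∈ F, Φ y ∈ arc j₀ a := by
    intro y hyF
    by_cases hy : y = x₀
    · simp only [hΦ_def, if_pos hy]
      exact self_mem_arc ha1
    · rw [mem_arc]
      exact (hΦoff y hyF hy).2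
  have hinj : Set.InjOn Φ F := by
    intro y hyF y' hy'F heq
    by_contra hne'
    -- neither can be x₀ together with the other not
    by_cases hy : y = x₀
    · have hy' : y' ≠ x₀ := by rw [← hy]; exact fun h => hne' h.symm
      have h1 := (hΦoff y' (by simpa using hy'F) hy').1
      rw [← heq] at h1
      simp only [hΦ_def, if_pos hy, off_self] at h1
      omega
    by_cases hy' : y' = x₀
    · have h1 := (hΦoff y (by simpa using hyF) hy).1
      rw [heq] at h1
      simp only [hΦ_def, if_pos hy', off_self] at h1
      omega
    -- both differ from x₀
    obtain ⟨hl1, hl2⟩ := hsz y (by simpa using hyF)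
    obtain ⟨hl1', hl2'⟩ := hsz y' (by simpa using hy'F)
    have hln : y.1 < n := by omega
    have hln' : y'.1 < n := by omega
    have hP := hpair y (by simpa using hyF) y' (by simpa using hy'F) hne'
    have hP' := hpair y' (by simpa using hy'F) y (by simpa using hyF) (fun h => hne' h.symm)
    by_cases hc : 1 ≤ off j₀ y.2 ∧ off j₀ y.2 < a <;>
      by_cases hc' : 1 ≤ off j₀ y'.2 ∧ off j₀ y'.2 < a
    · -- both branch 1 : same start
      simp only [hΦ_def, if_neg hy, if_neg hy', if_pos hc, if_pos hc'] at heq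
      rcases Nat.lt_trichotomy y.1 y'.1 with h | h | h
      · exact hP.1 (by rw [heq]; exact arc_subset_arc_left (le_of_lt h))
      · exact hne' (Prod.ext h heq)
      · exact hP'.1 (by rw [← heq]; exact arc_subset_arc_left (le_of_lt h))
    · -- y branch 1, y' branch 2 : start of y equals end of y'
      simp only [hΦ_def, if_neg hy, if_neg hy', if_pos hc, if_neg hc'] at heq
      obtain ⟨z, hz⟩ := hP'.2
      rw [Finset.mem_inter] at hz
      have hz1 := (mem_arc_end hl1' hln').mp hz.1
      rw [← heq] at hz1
      have hz2 := mem_arc.mp hz.2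
      have hzs : z ≠ y.2 := by
        intro h; rw [← h] at hz1; rw [off_self] at hz1; omega
      have := off_antisymm (j := y.2) (x := z) hzs
      have hzy2 : y.2 ≠ z := fun h => hzs h.symm
      have h2 := off_antisymm (j := z) (x := y.2) hzy2
      omega
    · -- y branch 2, y' branch 1
      simp only [hΦ_def, if_neg hy, if_neg hy', if_neg hc, if_pos hc'] at heq
      obtain ⟨z, hz⟩ := hP.2
      rw [Finset.mem_inter] at hz
      have hz1 := (mem_arc_end hl1 hln).mp hz.1
      rw [heq] at hz1
      have hz2 := mem_arc.mp hz.2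
      have hzs : z ≠ y'.2 := by
        intro h; rw [← h] at hz1; rw [off_self] at hz1; omega
      have hzy2 : y'.2 ≠ z := fun h => hzs h.symm
      have h2 := off_antisymm (j := z) (x := y'.2) hzy2
      omega
    · -- both branch 2 : same end
      simp only [hΦ_def, if_neg hy, if_neg hy', if_neg hc, if_neg hc'] at heq
      rcases Nat.lt_trichotomy y.1 y'.1 with h | h | h
      · exact hP.1 (arc_subset_arc_end hl1 (le_of_lt h) hln' heq)
      · have : y.2 = y'.2 := by
          have : y.2 + ((y.1 : ℕ) : Fin n) = y'.2 + ((y.1 : ℕ) : Fin n) := by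
            rw [heq, h]
          exact add_right_cancel this
        exact hne' (Prod.ext h this)
      · exact hP'.1 (arc_subset_arc_end hl1' (le_of_lt h) hln heq.symm)
  -- now sum up
  have hcard : F.card ≤ a := by
    have := Finset.card_le_card_of_injOn Φ (fun y hy => hmaps y hy) hinj
    rwa [card_arc j₀ (le_of_lt han)] at this
  have hbound : ∀ x ∈ F, ((x.1 : ℚ))⁻¹ ≤ ((a : ℚ))⁻¹ := by
    intro x hxF
    have h1 := hmin x hxF
    have ha0 : (0 : ℚ) < a := by positivity
    exact inv_anti₀ ha0 (by exact_mod_cast h1)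
  calc ∑ x ∈ F, ((x.1 : ℚ))⁻¹ ≤ ∑ _x ∈ F, ((a : ℚ))⁻¹ := Finset.sum_le_sum hbound
    _ = F.card * ((a : ℚ))⁻¹ := by rw [Finset.sum_const, nsmul_eq_mul]
    _ ≤ a * ((a : ℚ))⁻¹ := by
        apply mul_le_mul_of_nonneg_right _ (by positivity)
        exact_mod_cast hcard
    _ = 1 := by
        rw [mul_inv_cancel₀ (Nat.cast_ne_zero.mpr (by omega))]

end Cycle

section Vert
variable {n : ℕ} [NeZero n]

lemma arc_compl_nonempty {j : Fin n} {k : ℕ} (h2 : k < n) : ((arc j k)ᶜ : Finset (Fin n)).Nonempty := by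
  rw [← Finset.card_pos, Finset.card_compl, card_arc j (le_of_lt h2)]
  simp
  omega

lemma arc_ne_compl_self {j : Fin n} {k : ℕ} (h1 : 1 ≤ k) : arc j k ≠ (arc j k)ᶜ := by
  intro h
  have hj := self_mem_arc (j := j) h1
  have := Finset.mem_compl.mp (h ▸ hj)
  exact this hj

lemma tkpart_arc (j : Fin n) {k : ℕ} (h1 : 1 ≤ k) (h2 : k < n) :
    TKPart n {arc j k, (arc j k)ᶜ} := by
  refine ⟨Finset.card_pair (arc_ne_compl_self h1), ?_, ?_, ?_⟩
  · intro A hA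
    rcases Finset.mem_insert.mp hA with rfl | hA
    · exact ⟨j, self_mem_arc h1⟩
    · rw [Finset.mem_singleton] at hA
      subst hA
      exact arc_compl_nonempty h2
  · intro A hA B hB hAB
    rcases Finset.mem_insert.mp hA with rfl | hA <;>
      rcases Finset.mem_insert.mp hB with rfl | hB
    · exact absurd rfl hAB
    · rw [Finset.mem_singleton] at hB; subst hB; exact disjoint_compl_right
    · rw [Finset.mem_singleton] at hA; subst hA; exact disjoint_compl_left
    · rw [Finset.mem_singleton] at hA hB; subst hA; subst hB; exact absurd rfl hAB
  · rw [Finset.sup_insert, Finset.sup_singleton, id, id]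
    exact Finset.union_compl _

lemma arc_eq_arc {k l : ℕ} {j s : Fin n} (hk1 : 1 ≤ k) (hk2 : 2 * k ≤ n)
    (hl1 : 1 ≤ l) (hl2 : 2 * l ≤ n) (h : arc j k = arc s l) : k = l ∧ j = s := by
  have hkl : k = l := by
    have := card_arc j (k := k) (by omega)
    rw [h, card_arc s (by omega)] at this
    omega
  subst hkl
  refine ⟨rfl, ?_⟩
  by_contra hne
  have h1 : off s j < k := mem_arc.mp (h ▸ self_mem_arc hk1)
  have h2 : off j s < k := mem_arc.mp (h ▸ self_mem_arc (j := s) hk1 : s ∈ arc j k)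
  have := off_antisymm (j := s) (x := j) hne
  omega

lemma arc_ne_compl {k l : ℕ} {j s : Fin n} (hk1 : 1 ≤ k) (hk2 : 2 * k ≤ n)
    (hl1 : 1 ≤ l) (hl2 : 2 * l ≤ n)
    (hhalf : k + l = n → 2 * j.val < n ∧ 2 * s.val < n) :
    arc j k ≠ (arc s l)ᶜ := by
  intro h
  have hcard : k = n - l := by
    have := card_arc j (k := k) (by omega)
    rw [h, Finset.card_compl, card_arc s (by omega)] at this
    simpa using this.symm
  have hkl : k + l = n := by omega
  obtain ⟨hj, hs⟩ := hhalf hkl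
  have h1 : ¬ off j s < k := by
    have hss : s ∈ arc s l := self_mem_arc hl1
    have : s ∉ arc j k := by rw [h]; simpa using hss
    simpa [mem_arc] using this
  have h2 : ¬ off s j < l := by
    have hjj : j ∈ arc j k := self_mem_arc hk1
    rw [h, Finset.mem_compl] at hjj
    simpa [mem_arc] using hjj
  by_cases hne : j = s
  · subst hne; rw [off_self] at h1; omega
  · have h3 := off_antisymm (j := j) (x := s) (fun hh => hne hh.symm)
    have h4 := off_spec j s
    have h5 := off_spec s j
    have hjlt := j.isLt
    have hslt := s.isLt
    split at h4 <;> split at h5 <;> omega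

end Vert

/-- `χ(KG(n)) ≥ n·H_{⌊(n-1)/2⌋} + (1 - p(n))`, where `H_m` is the `m`-th harmonic number
and `p(n)` is the residue of `n` mod 2, the chromatic number being read as a real number. -/
theorem chromatic_KG_lower (n : ℕ) (hn : 2 ≤ n) :
    ∃ a : ℕ, (KG n).chromaticNumber = a ∧
      (n : ℝ) * ((harmonic ((n - 1) / 2) : ℚ) : ℝ) + (1 - ((n % 2 : ℕ) : ℝ)) ≤ (a : ℝ) := by
  classical
  haveI : NeZero n := ⟨by omega⟩
  haveI : Fintype (TKVert n) := Subtype.fintype _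
  set a := (KG n).chromaticNumber.toNat with ha
  have hcol : (KG n).Colorable a := SimpleGraph.colorable_chromaticNumber_of_fintype (KG n)
  have hne_top : (KG n).chromaticNumber ≠ ⊤ :=
    SimpleGraph.chromaticNumber_ne_top_iff_exists.mpr ⟨_, (KG n).colorable_of_fintype⟩
  refine ⟨a, (ENat.coe_toNat hne_top).symm, ?_⟩
  obtain ⟨C⟩ := hcol
  set m := (n - 1) / 2 with hm
  have v₀ : TKVert n := ⟨{arc (0 : Fin n) 1, (arc (0 : Fin n) 1)ᶜ}, tkpart_arc _ le_rfl (by omega)⟩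
  set c₀ : Fin a := C v₀ with hc₀
  set g : ℕ × Fin n → Fin a := fun x =>
    if h : 1 ≤ x.1 ∧ x.1 < n then
      C ⟨{arc x.2 x.1, (arc x.2 x.1)ᶜ}, tkpart_arc x.2 h.1 h.2⟩ else c₀ with hg
  set J1 : Finset (ℕ × Fin n) := (Finset.Icc 1 m) ×ˢ Finset.univ with hJ1
  set J2 : Finset (ℕ × Fin n) :=
    (if n % 2 = 0 then ({n / 2} : Finset ℕ) else ∅) ×ˢ
      (Finset.univ.filter fun j : Fin n => j.val < n / 2) with hJ2
  set J := J1 ∪ J2 with hJ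
  have hJmem : ∀ x ∈ J, 1 ≤ x.1 ∧ 2 * x.1 ≤ n ∧ (x.1 + x.1 = n → 2 * x.2.val < n) := by
    intro x hx
    rcases Finset.mem_union.mp hx with hx1 | hx2
    · rw [hJ1, Finset.mem_product, Finset.mem_Icc] at hx1
      refine ⟨by omega, by omega, fun h => absurd h (by omega)⟩
    · rw [hJ2, Finset.mem_product] at hx2
      obtain ⟨hps, hf⟩ := hx2
      by_cases hpar : n % 2 = 0
      · rw [if_pos hpar, Finset.mem_singleton] at hps
        rw [Finset.mem_filter] at hf
        refine ⟨by omega, by omega, fun _ => by omega⟩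
      · rw [if_neg hpar] at hps
        exact absurd hps (Finset.notMem_empty _)
  have hJinj : ∀ x ∈ J, ∀ y ∈ J,
      ({arc x.2 x.1, (arc x.2 x.1)ᶜ} : Finset (Finset (Fin n)))
        = {arc y.2 y.1, (arc y.2 y.1)ᶜ} → x = y := by
    intro x hx y hy h
    obtain ⟨hx1, hx2, hx3⟩ := hJmem x hx
    obtain ⟨hy1, hy2, hy3⟩ := hJmem y hy
    have hmem : arc x.2 x.1 ∈ ({arc y.2 y.1, (arc y.2 y.1)ᶜ} : Finset (Finset (Fin n))) :=
      h ▸ Finset.mem_insert_self _ _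
    rcases Finset.mem_insert.mp hmem with he | he
    · obtain ⟨h1, h2⟩ := arc_eq_arc hx1 hx2 hy1 hy2 he
      exact Prod.ext h1 h2
    · rw [Finset.mem_singleton] at he
      exact absurd he (arc_ne_compl hx1 hx2 hy1 hy2
        (fun hkl => ⟨hx3 (by omega), hy3 (by omega)⟩))
  have hfiber : ∀ c : Fin a, ∑ x ∈ J.filter (fun x => g x = c), ((x.1 : ℚ))⁻¹ ≤ 1 := by
    intro c
    apply cycle_lemma
    · intro x hx
      have := hJmem x (Finset.mem_filter.mp hx).1
      exact ⟨this.1, this.2.1⟩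
    · intro x hx y hy hxy
      obtain ⟨hxJ, hxc⟩ := Finset.mem_filter.mp hx
      obtain ⟨hyJ, hyc⟩ := Finset.mem_filter.mp hy
      obtain ⟨hx1, hx2, -⟩ := hJmem x hxJ
      obtain ⟨hy1, hy2, -⟩ := hJmem y hyJ
      have hxn : x.1 < n := by omega
      have hyn : y.1 < n := by omega
      set vx : TKVert n := ⟨{arc x.2 x.1, (arc x.2 x.1)ᶜ}, tkpart_arc x.2 hx1 hxn⟩ with hvx
      set vy : TKVert n := ⟨{arc y.2 y.1, (arc y.2 y.1)ᶜ}, tkpart_arc y.2 hy1 hyn⟩ with hvy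
      have hgx : g x = C vx := by rw [hg]; exact dif_pos ⟨hx1, hxn⟩
      have hgy : g y = C vy := by rw [hg]; exact dif_pos ⟨hy1, hyn⟩
      have hvne : vx ≠ vy := fun hh => hxy (hJinj x hxJ y hyJ (congrArg Subtype.val hh))
      have hnadj : ¬ (KG n).Adj vx vy := fun hadj =>
        C.valid hadj (by rw [← hgx, ← hgy, hxc, hyc])
      have hnn : ¬ ((∃ A ∈ vx.1, ∃ D ∈ vy.1, A ⊆ D) ∨ (∃ D ∈ vy.1, ∃ A ∈ vx.1, D ⊆ A)) :=
        fun hor => hnadj (And.intro hvne hor)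
      push_neg at hnn
      obtain ⟨h1, -⟩ := hnn
      constructor
      · exact h1 (arc x.2 x.1) (Finset.mem_insert_self _ _)
          (arc y.2 y.1) (Finset.mem_insert_self _ _)
      · have h3 := h1 (arc x.2 x.1) (Finset.mem_insert_self _ _)
          ((arc y.2 y.1)ᶜ) (Finset.mem_insert_of_mem (Finset.mem_singleton_self _))
        refine Finset.not_disjoint_iff_nonempty_inter.mp (fun hd => h3 ?_)
        exact le_compl_iff_disjoint_right.mpr hd
  -- sum computations
  have hdisj : Disjoint J1 J2 := by
    rw [Finset.disjoint_left]
    intro x hx1 hx2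
    rw [hJ1, Finset.mem_product, Finset.mem_Icc] at hx1
    rw [hJ2, Finset.mem_product] at hx2
    obtain ⟨hps, -⟩ := hx2
    by_cases hpar : n % 2 = 0
    · rw [if_pos hpar, Finset.mem_singleton] at hps
      omega
    · rw [if_neg hpar] at hps
      exact Finset.notMem_empty _ hps
  have hsum1 : ∑ x ∈ J1, ((x.1 : ℚ))⁻¹ = (n : ℚ) * harmonic m := by
    rw [hJ1, Finset.sum_product]
    simp only [Finset.sum_const, Finset.card_univ, Fintype.card_fin, nsmul_eq_mul]
    rw [harmonic_eq_sum_Icc, Finset.mul_sum]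
  have hcardhalf : (Finset.univ.filter fun j : Fin n => j.val < n / 2).card = n / 2 :=
    card_filter_val_lt (by omega)
  have hsum2 : ∑ x ∈ J2, ((x.1 : ℚ))⁻¹ = 1 - ((n % 2 : ℕ) : ℚ) := by
    by_cases hpar : n % 2 = 0
    · rw [hJ2, if_pos hpar, Finset.sum_product]
      rw [Finset.sum_singleton]
      simp only [Prod.fst, Finset.sum_const, hcardhalf, nsmul_eq_mul, hpar]
      rw [mul_inv_cancel₀ (Nat.cast_ne_zero.mpr (by omega))]
      simp
    · rw [hJ2, if_neg hpar]
      have h1 : n % 2 = 1 := by omega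
      simp [h1]
  have hq : (n : ℚ) * harmonic m + (1 - ((n % 2 : ℕ) : ℚ)) ≤ (a : ℚ) := by
    have hfw := Finset.sum_fiberwise J g (fun x => ((x.1 : ℚ))⁻¹)
    calc (n : ℚ) * harmonic m + (1 - ((n % 2 : ℕ) : ℚ))
        = ∑ x ∈ J, ((x.1 : ℚ))⁻¹ := by rw [hJ, Finset.sum_union hdisj, hsum1, hsum2]
      _ = ∑ c : Fin a, ∑ x ∈ J.filter (fun x => g x = c), ((x.1 : ℚ))⁻¹ := hfw.symm
      _ ≤ ∑ _c : Fin a, (1 : ℚ) := Finset.sum_le_sum (fun c _ => hfiber c)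
      _ = a := by simp
  exact_mod_cast hq
end

section
/- For a nonempty finite set A of natural numbers, write |A| = 2^{k+1} − l with integers k ≥ 0 and 1 ≤ l ≤ 2^k (this representation is unique), and define color(A) = (k, a), where a is the l-th largest element of A. Then for any two distinct nonempty finite sets A and B of natural numbers with color(A) = color(B), one has: A ∩ B ≠ ∅, A is not a subset of B, and B is not a subset of A. -/
/-- Kneser-style coloring: write `|A| = 2^(k+1) - l` with `k ≥ 0`, `1 ≤ l ≤ 2^k`, and color
`A` by the pair `(k, a)` where `a` is the `l`-th largest element of `A` (i.e. `a ∈ A` and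
exactly `l` elements of `A` are `≥ a`).  Two distinct nonempty finite sets of naturals
receiving the same color intersect, and neither is contained in the other. -/
theorem kneser_coloring_proper (A B : Finset ℕ) (hA : A.Nonempty) (hB : B.Nonempty)
    (hAB : A ≠ B)
    (k l : ℕ) (hkl : A.card = 2 ^ (k + 1) - l) (hl1 : 1 ≤ l) (hl2 : l ≤ 2 ^ k)
    (k' l' : ℕ) (hkl' : B.card = 2 ^ (k' + 1) - l') (hl1' : 1 ≤ l') (hl2' : l' ≤ 2 ^ k')
    (a : ℕ) (haA : a ∈ A) (hla : (A.filter fun x => a ≤ x).card = l)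
    (b : ℕ) (hbB : b ∈ B) (hlb : (B.filter fun x => b ≤ x).card = l')
    (hcolor : k = k' ∧ a = b) :
    (A ∩ B).Nonempty ∧ ¬ A ⊆ B ∧ ¬ B ⊆ A := by
  obtain ⟨hk, hab⟩ := hcolor
  subst hk; subst hab
  have hlA : l ≤ 2 ^ (k + 1) := hl2.trans (by simp [pow_succ])
  have hlB : l' ≤ 2 ^ (k + 1) := hl2'.trans (by simp [pow_succ])
  refine ⟨⟨a, Finset.mem_inter.2 ⟨haA, hbB⟩⟩, ?_, ?_⟩
  · intro hsub
    have h1 : l ≤ l' := by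
      rw [← hla, ← hlb]
      exact Finset.card_le_card (Finset.filter_subset_filter _ hsub)
    have h2 : A.card ≤ B.card := Finset.card_le_card hsub
    have : l = l' := by omega
    exact hAB (Finset.eq_of_subset_of_card_le hsub (by omega))
  · intro hsub
    have h1 : l' ≤ l := by
      rw [← hla, ← hlb]
      exact Finset.card_le_card (Finset.filter_subset_filter _ hsub)
    have h2 : B.card ≤ A.card := Finset.card_le_card hsub
    have : l = l' := by omega
    exact hAB ((Finset.eq_of_subset_of_card_le hsub (by omega)).symm)
end

section
/- Let G be a simple graph and k ≥ 1 an integer such that: (i) every clique of G is contained in a clique of cardinality k; (ii) G has no clique of cardinality k+1; (iii) G admits a proper coloring with k colors; and (iv) the graph whose vertices are the k-element cliques of G, with two such cliques adjacent when their intersection has exactly k−1 elements, is connected. Then G is uniquely k-colorable: for any two proper colorings c₁, c₂ of G with color set Fin k, there is a permutation σ of Fin k with c₂ = σ ∘ c₁. -/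
/-- The graph whose vertices are the `k`-element cliques of `G`, two such cliques being
adjacent when their intersection has exactly `k - 1` elements. -/
def maxCliqueGraph {V : Type*} [DecidableEq V] (G : SimpleGraph V) (k : ℕ) :
    SimpleGraph {t : Finset V // G.IsClique ↑t ∧ t.card = k} where
  Adj s t := s ≠ t ∧ (s.1 ∩ t.1).card = k - 1
  symm := ⟨by
    rintro s t ⟨h1, h2⟩
    exact ⟨h1.symm, by rwa [Finset.inter_comm]⟩⟩
  loopless := ⟨fun s h => h.1 rfl⟩

lemma perm_eq_of_eq_off {k : ℕ} (σ τ : Equiv.Perm (Fin k)) (a : Fin k)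
    (h : ∀ b, b ≠ a → σ b = τ b) : σ = τ := by
  have ha : σ a = τ a := by
    by_contra hne
    have hc : τ.symm (σ a) ≠ a := fun he =>
      hne (by rw [← Equiv.apply_symm_apply τ (σ a), he])
    have h2 := h _ hc
    have h3 : σ (τ.symm (σ a)) = σ a := by rw [h2, Equiv.apply_symm_apply]
    exact hc (σ.injective h3)
  refine Equiv.ext fun b => ?_
  by_cases hb : b = a
  · rw [hb]; exact ha
  · exact h b hb

lemma perm_eq_of_agree {k : ℕ} (hk : 1 ≤ k) (σ τ : Equiv.Perm (Fin k)) (A : Finset (Fin k))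
    (hA : A.card = k - 1) (h : ∀ a ∈ A, σ a = τ a) : σ = τ := by
  have hcompl : Aᶜ.card = 1 := by
    rw [Finset.card_compl, hA, Fintype.card_fin]
    omega
  obtain ⟨a, ha⟩ := Finset.card_eq_one.mp hcompl
  refine perm_eq_of_eq_off σ τ a fun b hb => h b ?_
  by_contra hbA
  have : b ∈ Aᶜ := Finset.mem_compl.mpr hbA
  rw [ha, Finset.mem_singleton] at this
  exact hb this

noncomputable def cliqueEquiv {V : Type*} [DecidableEq V] {G : SimpleGraph V} {k : ℕ}
    (c : G.Coloring (Fin k)) (t : Finset V) (ht : G.IsClique ↑t) (hcard : t.card = k) :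
    {v // v ∈ t} ≃ Fin k :=
  Equiv.ofBijective (fun v => c v.1) <| by
    rw [Fintype.bijective_iff_injective_and_card, Fintype.card_coe, hcard]
    refine ⟨fun u v h => ?_, (Fintype.card_fin k).symm⟩
    by_contra hne
    exact c.valid (ht (Finset.mem_coe.mpr u.2) (Finset.mem_coe.mpr v.2)
      (fun e => hne (Subtype.ext e))) h

lemma cliqueEquiv_symm_apply {V : Type*} [DecidableEq V] {G : SimpleGraph V} {k : ℕ}
    (c : G.Coloring (Fin k)) (t : Finset V) (ht : G.IsClique ↑t) (hcard : t.card = k)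
    {v : V} (hv : v ∈ t) : (cliqueEquiv c t ht hcard).symm (c v) = ⟨v, hv⟩ := by
  rw [Equiv.symm_apply_eq]
  rfl

/-- If every clique of `G` extends to a clique of cardinality `k`, `G` has no clique of
cardinality `k + 1`, `G` is properly `k`-colorable, and the graph of `k`-cliques (adjacent
when meeting in `k - 1` elements) is connected, then `G` is uniquely `k`-colorable. -/
theorem uniquely_colorable {V : Type*} [DecidableEq V] (G : SimpleGraph V) (k : ℕ)
    (hk : 1 ≤ k)
    (hext : ∀ s : Finset V, G.IsClique ↑s → ∃ t : Finset V, s ⊆ t ∧ G.IsClique ↑t ∧ t.card = k)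
    (hmax : ∀ t : Finset V, G.IsClique ↑t → t.card ≠ k + 1)
    (hcol : G.Colorable k)
    (hconn : (maxCliqueGraph G k).Connected) :
    ∀ c₁ c₂ : G.Coloring (Fin k), ∃ σ : Equiv.Perm (Fin k), ∀ v, c₂ v = σ (c₁ v) := by
  intro c₁ c₂
  set K := {t : Finset V // G.IsClique ↑t ∧ t.card = k} with hK
  let F : K → Equiv.Perm (Fin k) := fun t =>
    (cliqueEquiv c₁ t.1 t.2.1 t.2.2).symm.trans (cliqueEquiv c₂ t.1 t.2.1 t.2.2)
  have hFapply : ∀ (t : K) (v : V) (hv : v ∈ t.1), F t (c₁ v) = c₂ v := by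
    intro t v hv
    show (cliqueEquiv c₂ t.1 t.2.1 t.2.2) ((cliqueEquiv c₁ t.1 t.2.1 t.2.2).symm (c₁ v)) = c₂ v
    rw [cliqueEquiv_symm_apply c₁ t.1 t.2.1 t.2.2 hv]
    rfl
  have hstep : ∀ s t : K, (maxCliqueGraph G k).Adj s t → F s = F t := by
    intro s t hadj
    obtain ⟨hne, hcard⟩ := hadj
    refine perm_eq_of_agree hk _ _ ((s.1 ∩ t.1).image c₁) ?_ ?_
    · rw [Finset.card_image_of_injOn, hcard]
      intro u hu v hv huv
      by_contra hne2
      exact c₁.valid (s.2.1 (Finset.mem_coe.mpr (Finset.mem_of_mem_inter_left hu))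
        (Finset.mem_coe.mpr (Finset.mem_of_mem_inter_left hv)) hne2) huv
    · intro a ha
      obtain ⟨v, hv, rfl⟩ := Finset.mem_image.mp ha
      rw [hFapply s v (Finset.mem_of_mem_inter_left hv),
        hFapply t v (Finset.mem_of_mem_inter_right hv)]
  have hconst : ∀ s t : K, F s = F t := by
    intro s t
    obtain ⟨p⟩ := hconn s t
    induction p with
    | nil => rfl
    | cons h _ ih => exact (hstep _ _ h).trans ih
  obtain ⟨t₀⟩ := hconn.nonempty
  refine ⟨F t₀, fun v => ?_⟩
  have hvclique : G.IsClique ↑({v} : Finset V) := by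
    simp [SimpleGraph.isClique_iff, Set.Pairwise]
  obtain ⟨t, hsub, htc, htcard⟩ := hext {v} hvclique
  have hvt : v ∈ t := hsub (Finset.mem_singleton_self v)
  rw [hconst t₀ ⟨t, htc, htcard⟩]
  exact (hFapply ⟨t, htc, htcard⟩ v hvt).symm
end

section
/- Let N be the simple graph whose vertices are the 12 edges of the octahedron graph O, with two edges adjacent if and only if they share no endpoint. Then the chromatic number of N equals 4. -/
/-- The octahedron graph: six vertices with antipodal pairing `x ↔ x + 3`, and edges all
pairs of distinct non-antipodal vertices. -/
def octahedron : SimpleGraph (Fin 6) where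
  Adj u v := u ≠ v ∧ u + 3 ≠ v ∧ v + 3 ≠ u
  symm := ⟨fun _ _ ⟨h1, h2, h3⟩ => ⟨h1.symm, h3, h2⟩⟩
  loopless := ⟨fun _ h => h.1 rfl⟩

/-- The graph `N` on the 12 edges of the octahedron, two edges adjacent iff they share no
endpoint. -/
def edgeDisjointGraph : SimpleGraph ↥octahedron.edgeSet where
  Adj e f := ∀ x : Fin 6, x ∈ (e : Sym2 (Fin 6)) → x ∉ (f : Sym2 (Fin 6))
  symm := ⟨fun e f h x hxf hxe => h x hxe hxf⟩
  loopless := by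
    constructor
    intro e h
    have hm := Sym2.out_fst_mem e.1
    exact h _ hm hm

instance octAdjDec : DecidableRel octahedron.Adj :=
  fun a b => decidable_of_iff (a ≠ b ∧ a + 3 ≠ b ∧ b + 3 ≠ a) Iff.rfl

instance edgAdjDec : DecidableRel edgeDisjointGraph.Adj :=
  fun e f => decidable_of_iff
    (∀ x : Fin 6, x ∈ (e : Sym2 (Fin 6)) → x ∉ (f : Sym2 (Fin 6))) Iff.rfl

/-- Two-argument version of the 4-coloring of `N`. -/
def col2 : Fin 6 → Fin 6 → Fin 4 := fun a b =>
  if a = 0 ∨ b = 0 then 0 else if a = 1 ∨ b = 1 then 1 else if a = 2 ∨ b = 2 then 2 else 3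

lemma col2_symm : ∀ a b : Fin 6, col2 a b = col2 b a := by decide

/-- The 4-coloring of `N` as a function on `Sym2 (Fin 6)`. -/
def col : Sym2 (Fin 6) → Fin 4 := Sym2.lift ⟨col2, col2_symm⟩

lemma col_key : ∀ a b c d : Fin 6, octahedron.Adj a b → octahedron.Adj c d →
    a ≠ c → a ≠ d → b ≠ c → b ≠ d → col2 a b ≠ col2 c d := by decide

/-- `N` is 4-colorable. -/
lemma colorable_four : edgeDisjointGraph.Colorable 4 := by
  refine ⟨SimpleGraph.Coloring.mk (fun e => col e.1) ?_⟩
  rintro ⟨s, hs⟩ ⟨t, ht⟩ hadj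
  have hadj' : ∀ x : Fin 6, x ∈ s → x ∉ t := hadj
  clear hadj
  revert hs ht hadj'
  induction s using Sym2.ind with
  | _ a b =>
    induction t using Sym2.ind with
    | _ c d =>
      intro hs ht hadj'
      rw [SimpleGraph.mem_edgeSet] at hs ht
      have hac : a ≠ c := fun h => hadj' a (Sym2.mem_mk_left a b) (h ▸ Sym2.mem_mk_left c d)
      have had : a ≠ d := fun h => hadj' a (Sym2.mem_mk_left a b) (h ▸ Sym2.mem_mk_right c d)
      have hbc : b ≠ c := fun h => hadj' b (Sym2.mem_mk_right a b) (h ▸ Sym2.mem_mk_left c d)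
      have hbd : b ≠ d := fun h => hadj' b (Sym2.mem_mk_right a b) (h ▸ Sym2.mem_mk_right c d)
      simpa [col] using col_key a b c d hs ht hac had hbc hbd

/-- Constructor for octahedron edges. -/
def mkE (a b : Fin 6) (h : octahedron.Adj a b := by decide) : ↥octahedron.edgeSet :=
  ⟨s(a, b), (SimpleGraph.mem_edgeSet octahedron).mpr h⟩

/-- A fixed enumeration of the 12 edges of the octahedron; the first three form a
perfect matching. -/
def vE : Fin 12 → ↥octahedron.edgeSet :=
  ![mkE 0 1, mkE 2 3, mkE 4 5, mkE 0 2, mkE 0 4, mkE 0 5,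
    mkE 1 2, mkE 1 3, mkE 1 5, mkE 2 4, mkE 3 4, mkE 3 5]

set_option maxRecDepth 10000 in
set_option maxHeartbeats 8000000 in
set_option synthInstance.maxSize 4000 in
set_option synthInstance.maxHeartbeats 2000000 in
/-- Exhaustive check: a 3-coloring normalized on the matching always has a monochromatic
disjoint pair. Variables `a..i` are the colors of edges `vE 3 .. vE 11`. -/
lemma noThree' : ∀ a b c d e f g h i : Fin 3,
    g = 0 ∨ h = 0 ∨ i = 0 ∨ b = 1 ∨ c = 1 ∨ f = 1 ∨ a = 2 ∨ d = 2 ∨ e = 2 ∨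
    a = e ∨ a = f ∨ a = h ∨ a = i ∨ b = d ∨ b = e ∨ b = f ∨ b = i ∨
    c = d ∨ c = e ∨ c = g ∨ c = h ∨ d = h ∨ d = i ∨ e = g ∨ f = g ∨ f = h ∨
    g = i := by
  decide

lemma not_colorable_three : ¬ edgeDisjointGraph.Colorable 3 := by
  rintro ⟨C⟩
  set c : Fin 12 → Fin 3 := fun i => C (vE i) with hc
  have key : ∀ i j : Fin 12, edgeDisjointGraph.Adj (vE i) (vE j) → c i ≠ c j :=
    fun i j h => C.valid h
  -- the three matching edges get pairwise distinct colors
  have h01 : c 0 ≠ c 1 := key 0 1 (by decide)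
  have h02 : c 0 ≠ c 2 := key 0 2 (by decide)
  have h12 : c 1 ≠ c 2 := key 1 2 (by decide)
  have vinj : Function.Injective (![c 0, c 1, c 2] : Fin 3 → Fin 3) := by
    intro x y hxy
    fin_cases x <;> fin_cases y <;> simp_all
  let σ : Fin 3 ≃ Fin 3 :=
    Equiv.ofBijective _ ((Finite.injective_iff_bijective).mp vinj)
  have hσ0 : σ.symm (c 0) = 0 := σ.symm_apply_apply 0
  have hσ1 : σ.symm (c 1) = 1 := σ.symm_apply_apply 1
  have hσ2 : σ.symm (c 2) = 2 := σ.symm_apply_apply 2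
  have key' : ∀ i j : Fin 12, edgeDisjointGraph.Adj (vE i) (vE j) →
      σ.symm (c i) ≠ σ.symm (c j) :=
    fun i j h hh => key i j h (σ.symm.injective hh)
  have H := noThree' (σ.symm (c 3)) (σ.symm (c 4)) (σ.symm (c 5)) (σ.symm (c 6))
    (σ.symm (c 7)) (σ.symm (c 8)) (σ.symm (c 9)) (σ.symm (c 10)) (σ.symm (c 11))
  rcases H with H|H|H|H|H|H|H|H|H|H|H|H|H|H|H|H|H|H|H|H|H|H|H|H|H|H|H
  · exact key' 9 0 (by decide) (H.trans hσ0.symm)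
  · exact key' 10 0 (by decide) (H.trans hσ0.symm)
  · exact key' 11 0 (by decide) (H.trans hσ0.symm)
  · exact key' 4 1 (by decide) (H.trans hσ1.symm)
  · exact key' 5 1 (by decide) (H.trans hσ1.symm)
  · exact key' 8 1 (by decide) (H.trans hσ1.symm)
  · exact key' 3 2 (by decide) (H.trans hσ2.symm)
  · exact key' 6 2 (by decide) (H.trans hσ2.symm)
  · exact key' 7 2 (by decide) (H.trans hσ2.symm)
  · exact key' 3 7 (by decide) H
  · exact key' 3 8 (by decide) H
  · exact key' 3 10 (by decide) H
  · exact key' 3 11 (by decide) H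
  · exact key' 4 6 (by decide) H
  · exact key' 4 7 (by decide) H
  · exact key' 4 8 (by decide) H
  · exact key' 4 11 (by decide) H
  · exact key' 5 6 (by decide) H
  · exact key' 5 7 (by decide) H
  · exact key' 5 9 (by decide) H
  · exact key' 5 10 (by decide) H
  · exact key' 6 10 (by decide) H
  · exact key' 6 11 (by decide) H
  · exact key' 7 9 (by decide) H
  · exact key' 8 9 (by decide) H
  · exact key' 8 10 (by decide) H
  · exact key' 9 11 (by decide) H

/-- `χ(N) = 4`. -/
theorem chromatic_N_eq_four : edgeDisjointGraph.chromaticNumber = 4 := by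
  refine le_antisymm ?_ ?_
  · have := colorable_four.chromaticNumber_le
    exact_mod_cast this
  · by_contra h
    push_neg at h
    have h3 : edgeDisjointGraph.chromaticNumber ≤ (3 : ℕ) := by
      have : edgeDisjointGraph.chromaticNumber < (3 : ℕ∞) + 1 := by
        rw [show (3 : ℕ∞) + 1 = 4 by norm_num]
        exact h
      exact_mod_cast Order.le_of_lt_add_one this
    exact not_colorable_three (SimpleGraph.chromaticNumber_le_iff_colorable.mp h3)
end

section
/- Let C be the simple graph on the 12 edges of the octahedron graph O together with its 4 unordered antipodal face pairs, with adjacency as specified. Then the chromatic number of C equals 5. -/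
/-- A face of the octahedron: a triangle, i.e. three vertices containing no antipodal pair. -/
def IsFace (T : Finset (Fin 6)) : Prop := T.card = 3 ∧ ∀ x ∈ T, x + 3 ∉ T

/-- An unordered antipodal pair of faces `{T, -T}`. -/
def FacePair := {P : Finset (Finset (Fin 6)) // ∃ T, IsFace T ∧ P = {T, T.image (· + 3)}}

/-- Vertices of the graph `C`: the 12 edges of the octahedron together with the 4
antipodal face pairs. -/
def CVert := ↥octahedron.edgeSet ⊕ FacePair

/-- The graph `C`: two edges adjacent iff they share no endpoint; an edge and a face pair
`{T, -T}` adjacent iff the edge is contained in `T` or in `-T`; no two face pairs adjacent. -/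
def octC : SimpleGraph CVert where
  Adj v w :=
    match v, w with
    | Sum.inl e, Sum.inl f => ∀ x : Fin 6, x ∈ (e : Sym2 (Fin 6)) → x ∉ (f : Sym2 (Fin 6))
    | Sum.inl e, Sum.inr P => ∃ T ∈ P.1, ∀ x ∈ (e : Sym2 (Fin 6)), x ∈ T
    | Sum.inr P, Sum.inl e => ∃ T ∈ P.1, ∀ x ∈ (e : Sym2 (Fin 6)), x ∈ T
    | Sum.inr _, Sum.inr _ => False
  symm := by
    constructor
    rintro (e | P) (f | Q) h
    · exact fun x hxf hxe => h x hxe hxf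
    · exact h
    · exact h
    · exact h
  loopless := by
    constructor
    rintro (e | P) h
    · exact h _ (Sym2.out_fst_mem e.1) (Sym2.out_fst_mem e.1)
    · exact h

namespace OctCProof

/-! ### Part A: an abstract backtracking search -/

def missing (x0 x1 x2 x3 x4 x5 : Nat) : Bool :=
  [0,1,2,3].any fun a =>
    (x0 != a) && (x1 != a) && (x2 != a) && (x3 != a) && (x4 != a) && (x5 != a)

def facesOK (c : Nat → Nat) : Bool :=
  missing (c 0) (c 1) (c 5) (c 8) (c 9) (c 10) &&
  missing (c 3) (c 4) (c 7) (c 8) (c 9) (c 11) &&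
  missing (c 0) (c 2) (c 3) (c 6) (c 10) (c 11) &&
  missing (c 1) (c 2) (c 4) (c 5) (c 6) (c 7)

def nbrsL : List (List Nat) :=
  [[], [0], [0,1], [2], [1], [1], [2,4,5], [2,3,4,5], [1,3,4], [0,5,7,8],
   [0,3,5,6,8], [0,3,4,6,9]]

def nbrs (k : Nat) : List Nat := nbrsL.getD k []

def allowed (k : Nat) : List Nat :=
  if k = 0 then [0] else if k = 1 then [1] else if k = 2 then [2] else [0,1,2,3]

def search : Nat → Nat → (Nat → Nat) → Bool
  | 0, _, c => facesOK c
  | fuel+1, k, c =>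
    (allowed k).any fun a =>
      ((nbrs k).all fun j => c j != a) &&
        search fuel (k+1) (fun i => if i = k then a else c i)

lemma search_false : search 12 0 (fun _ => 0) = false := by decide

lemma nbrs_lt (k j : Nat) (hj : j ∈ nbrs k) : j < k := by
  rcases Nat.lt_or_ge k 12 with hk | hk
  · interval_cases k <;> simp [nbrs, nbrsL] at hj <;> omega
  · rw [nbrs, List.getD_eq_default] at hj
    · simp at hj
    · simp [nbrsL]; omega

lemma search_complete (c : Nat → Nat) (h4 : ∀ i, c i < 4)
    (h0 : c 0 = 0) (h1 : c 1 = 1) (h2 : c 2 = 2)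
    (hp : ∀ k, ∀ j ∈ nbrs k, c j ≠ c k)
    (hf : facesOK c = true) :
    ∀ fuel k, fuel + k = 12 → ∀ c' : Nat → Nat, (∀ i, i < k → c' i = c i) →
      search fuel k c' = true := by
  intro fuel
  induction fuel with
  | zero =>
    intro k hk c' ha
    have h12 : k = 12 := by omega
    subst h12
    show facesOK c' = true
    unfold facesOK
    rw [ha 0 (by omega), ha 1 (by omega), ha 2 (by omega), ha 3 (by omega),
      ha 4 (by omega), ha 5 (by omega), ha 6 (by omega), ha 7 (by omega),
      ha 8 (by omega), ha 9 (by omega), ha 10 (by omega), ha 11 (by omega)]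
    exact hf
  | succ fuel ih =>
    intro k hk c' ha
    show (allowed k).any _ = true
    rw [List.any_eq_true]
    refine ⟨c k, ?_, ?_⟩
    · by_cases hk0 : k = 0
      · subst hk0; simp [allowed, h0]
      · by_cases hk1 : k = 1
        · subst hk1; simp [allowed, h1]
        · by_cases hk2 : k = 2
          · subst hk2; simp [allowed, h2]
          · have := h4 k
            simp [allowed, hk0, hk1, hk2]
            omega
    · rw [Bool.and_eq_true]
      constructor
      · rw [List.all_eq_true]
        intro j hj
        rw [ha j (nbrs_lt k j hj)]
        simpa using hp k j hj
      · apply ih (k+1) (by omega)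
        intro i hi
        by_cases hik : i = k
        · subst hik; simp
        · simp only [hik, if_false]
          exact ha i (by omega)

end OctCProof


namespace OctCProof

abbrev octAdj (a b : Fin 6) : Prop := a ≠ b ∧ a + 3 ≠ b ∧ b + 3 ≠ a

def E (a b : Fin 6) (h : octAdj a b) : CVert :=
  Sum.inl ⟨s(a, b), (SimpleGraph.mem_edgeSet _).mpr h⟩

def F (T : Finset (Fin 6)) (h : IsFace T) : CVert :=
  Sum.inr ⟨{T, T.image (· + 3)}, T, h, rfl⟩

def FP (T : Finset (Fin 6)) (h : IsFace T) : FacePair :=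
  ⟨{T, T.image (· + 3)}, T, h, rfl⟩

lemma adjEE' (e f : octahedron.edgeSet)
    (h : ∀ x : Fin 6, x ∈ (e : Sym2 (Fin 6)) → x ∉ (f : Sym2 (Fin 6))) :
    octC.Adj (Sum.inl e) (Sum.inl f) := h

lemma adjEF' (e : octahedron.edgeSet) (P : FacePair)
    (h : ∃ T ∈ P.1, ∀ x ∈ (e : Sym2 (Fin 6)), x ∈ T) :
    octC.Adj (Sum.inl e) (Sum.inr P) := h

-- the 12 edges
def vs : List CVert :=
  [E 0 1 (by decide), E 2 3 (by decide), E 4 5 (by decide), E 0 2 (by decide),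
   E 0 4 (by decide), E 0 5 (by decide), E 1 2 (by decide), E 1 3 (by decide),
   E 1 5 (by decide), E 2 4 (by decide), E 3 4 (by decide), E 3 5 (by decide)]

def idx (i : Nat) : CVert := vs.getD i (E 0 1 (by decide))

lemma perm3 : ∀ (a b c : Fin 4), a ≠ b → a ≠ c → b ≠ c →
    ∃ σ : Equiv.Perm (Fin 4), σ a = 0 ∧ σ b = 1 ∧ σ c = 2 := by
  decide

end OctCProof

namespace OctCProof

/-! ### Upper bound: explicit 5-coloring -/

def ecol (s : Sym2 (Fin 6)) : Fin 5 :=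
  if (0 : Fin 6) ∈ s then 0 else if (3 : Fin 6) ∈ s then 1
    else if (1 : Fin 6) ∈ s then 2 else 3

def col : CVert → Fin 5
  | Sum.inl e => ecol e.val
  | Sum.inr _ => 4

lemma ecol_ne4 : ∀ s : Sym2 (Fin 6), ecol s ≠ 4 := by decide

lemma ecol_proper : ∀ a b a' b' : Fin 6, octAdj a b → octAdj a' b' →
    (∀ x : Fin 6, x ∈ (s(a,b) : Sym2 (Fin 6)) → x ∉ (s(a',b') : Sym2 (Fin 6))) →
    ecol s(a,b) ≠ ecol s(a',b') := by decide

lemma colorable5 : octC.Colorable 5 := by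
  refine ⟨SimpleGraph.Coloring.mk col ?_⟩
  rintro (⟨s, hs⟩ | P) (⟨t, ht⟩ | Q) hadj
  · revert hs ht hadj
    induction s using Sym2.ind with | _ a b =>
    induction t using Sym2.ind with | _ a' b' =>
    intro hs ht hadj
    exact ecol_proper a b a' b'
      ((SimpleGraph.mem_edgeSet _).mp hs) ((SimpleGraph.mem_edgeSet _).mp ht) hadj
  · exact ecol_ne4 s
  · exact (ecol_ne4 t).symm
  · exact hadj.elim

/-! ### Lower bound -/

lemma hTa : IsFace {0,1,5} := ⟨by decide, by decide⟩
lemma hTb : IsFace {0,2,4} := ⟨by decide, by decide⟩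
lemma hTc : IsFace {0,1,2} := ⟨by decide, by decide⟩
lemma hTd : IsFace {0,4,5} := ⟨by decide, by decide⟩

lemma not_colorable4 : ¬ octC.Colorable 4 := by
  rintro ⟨C0⟩
  obtain ⟨σ, hs0, hs1, hs2⟩ :=
    perm3 (C0 (idx 0)) (C0 (idx 1)) (C0 (idx 2))
      (C0.valid (adjEE' _ _ (by decide)))
      (C0.valid (adjEE' _ _ (by decide)))
      (C0.valid (adjEE' _ _ (by decide)))
  set f : CVert → Fin 4 := fun v => σ (C0 v) with hfdef
  have hvalid : ∀ {v w : CVert}, octC.Adj v w → f v ≠ f w :=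
    fun h => σ.injective.ne (C0.valid h)
  set c : Nat → Nat := fun i => (f (idx i)).val with hcdef
  have h4 : ∀ i, c i < 4 := fun i => (f (idx i)).isLt
  have h0 : c 0 = 0 := by show (f (idx 0)).val = 0; rw [show f (idx 0) = 0 from hs0]; rfl
  have h1 : c 1 = 1 := by show (f (idx 1)).val = 1; rw [show f (idx 1) = 1 from hs1]; rfl
  have h2 : c 2 = 2 := by show (f (idx 2)).val = 2; rw [show f (idx 2) = 2 from hs2]; rfl
  have hp : ∀ k, ∀ j ∈ nbrs k, c j ≠ c k := by
    intro k j hj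
    have hk : k < 12 := by
      by_contra h
      push_neg at h
      rw [nbrs, List.getD_eq_default] at hj
      · simp at hj
      · simp [nbrsL]; omega
    have hjk : j < k := nbrs_lt k j hj
    interval_cases k <;> interval_cases j <;> simp [nbrs, nbrsL] at hj <;>
      exact fun h => hvalid (adjEE' _ _ (by decide)) (Fin.val_injective h)
  have hf : facesOK c = true := by
    have mt : ∀ x0 x1 x2 x3 x4 x5 a : Nat, a < 4 →
        x0 ≠ a → x1 ≠ a → x2 ≠ a → x3 ≠ a → x4 ≠ a → x5 ≠ a →
        missing x0 x1 x2 x3 x4 x5 = true := by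
      intro x0 x1 x2 x3 x4 x5 a ha n0 n1 n2 n3 n4 n5
      rw [missing, List.any_eq_true]
      exact ⟨a, by simp; omega, by simp [n0, n1, n2, n3, n4, n5]⟩
    have key : ∀ (P : FacePair) (i : Nat),
        octC.Adj (idx i) (Sum.inr P) → c i ≠ (f (Sum.inr P)).val :=
      fun P i h => fun he => hvalid h (Fin.val_injective he)
    rw [facesOK, Bool.and_eq_true, Bool.and_eq_true, Bool.and_eq_true]
    refine ⟨⟨⟨?_, ?_⟩, ?_⟩, ?_⟩
    · exact mt _ _ _ _ _ _ _ (f (Sum.inr (FP _ hTa))).isLt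
        (key (FP _ hTa) 0 (adjEF' _ _ (by decide))) (key (FP _ hTa) 1 (adjEF' _ _ (by decide)))
        (key (FP _ hTa) 5 (adjEF' _ _ (by decide))) (key (FP _ hTa) 8 (adjEF' _ _ (by decide)))
        (key (FP _ hTa) 9 (adjEF' _ _ (by decide))) (key (FP _ hTa) 10 (adjEF' _ _ (by decide)))
    · exact mt _ _ _ _ _ _ _ (f (Sum.inr (FP _ hTb))).isLt
        (key (FP _ hTb) 3 (adjEF' _ _ (by decide))) (key (FP _ hTb) 4 (adjEF' _ _ (by decide)))
        (key (FP _ hTb) 7 (adjEF' _ _ (by decide))) (key (FP _ hTb) 8 (adjEF' _ _ (by decide)))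
        (key (FP _ hTb) 9 (adjEF' _ _ (by decide))) (key (FP _ hTb) 11 (adjEF' _ _ (by decide)))
    · exact mt _ _ _ _ _ _ _ (f (Sum.inr (FP _ hTc))).isLt
        (key (FP _ hTc) 0 (adjEF' _ _ (by decide))) (key (FP _ hTc) 2 (adjEF' _ _ (by decide)))
        (key (FP _ hTc) 3 (adjEF' _ _ (by decide))) (key (FP _ hTc) 6 (adjEF' _ _ (by decide)))
        (key (FP _ hTc) 10 (adjEF' _ _ (by decide))) (key (FP _ hTc) 11 (adjEF' _ _ (by decide)))
    · exact mt _ _ _ _ _ _ _ (f (Sum.inr (FP _ hTd))).isLt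
        (key (FP _ hTd) 1 (adjEF' _ _ (by decide))) (key (FP _ hTd) 2 (adjEF' _ _ (by decide)))
        (key (FP _ hTd) 4 (adjEF' _ _ (by decide))) (key (FP _ hTd) 5 (adjEF' _ _ (by decide)))
        (key (FP _ hTd) 6 (adjEF' _ _ (by decide))) (key (FP _ hTd) 7 (adjEF' _ _ (by decide)))
  have := search_complete c h4 h0 h1 h2 hp hf 12 0 rfl (fun _ => 0)
    (fun i hi => absurd hi (by omega))
  rw [search_false] at this
  exact Bool.false_ne_true this

end OctCProof

/-- `χ(C) = 5`. -/
theorem chromatic_C_eq_five : octC.chromaticNumber = 5 := by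
  refine le_antisymm ?_ ?_
  · have h := OctCProof.colorable5.chromaticNumber_le
    simpa using h
  · have h : ¬ octC.chromaticNumber ≤ (4 : ℕ) :=
      fun h => OctCProof.not_colorable4
        (SimpleGraph.chromaticNumber_le_iff_colorable.mp h)
    have h4 : (4 : ℕ∞) < octC.chromaticNumber := by
      simpa using lt_of_not_ge h
    have := Order.add_one_le_of_lt h4
    rw [show (4 : ℕ∞) + 1 = 5 by norm_num] at this
    exact this
end

section
/- The map sending each line L in ℤ² to its reduction mod 3 is a proper vertex coloring of the graph F' with 4 colors: the reduction mod 3 of any line in ℤ² is a well-defined one-dimensional subspace of (ℤ/3ℤ)², there are exactly 4 such subspaces, and whenever two lines L₁, L₂ in ℤ² satisfy d(L₁,L₂) ∈ {1,2}, their reductions mod 3 are distinct. -/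
/-- A primitive vector of `ℤ²`: coordinates with gcd 1. -/
def Primitive (u : Fin 2 → ℤ) : Prop := Int.gcd (u 0) (u 1) = 1

/-- A line in `ℤ²`: the set of integer multiples of a primitive vector (equivalently, a
rank-one direct summand). -/
def IsLine (L : Submodule ℤ (Fin 2 → ℤ)) : Prop :=
  ∃ u : Fin 2 → ℤ, Primitive u ∧ L = Submodule.span ℤ {u}

/-- The type of lines in `ℤ²`. -/
abbrev Line := {L : Submodule ℤ (Fin 2 → ℤ) // IsLine L}

/-- `|det(u, v)|` for `u, v ∈ ℤ²`. -/
def detAbs (u v : Fin 2 → ℤ) : ℕ := (u 0 * v 1 - u 1 * v 0).natAbs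

/-- The graph `F'`: lines `L₁, L₂` in `ℤ²` are adjacent iff `d(L₁,L₂) ∈ {1,2}`, where
`d` is computed from primitive generators. -/
def Fprime : SimpleGraph Line where
  Adj L₁ L₂ := L₁ ≠ L₂ ∧ ∃ u v : Fin 2 → ℤ, Primitive u ∧ Primitive v ∧
    L₁.1 = Submodule.span ℤ {u} ∧ L₂.1 = Submodule.span ℤ {v} ∧
    (detAbs u v = 1 ∨ detAbs u v = 2)
  symm := ⟨by
    rintro L₁ L₂ ⟨hne, u, v, hu, hv, h1, h2, hd⟩
    refine ⟨hne.symm, v, u, hv, hu, h2, h1, ?_⟩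
    have h : v 0 * u 1 - v 1 * u 0 = -(u 0 * v 1 - u 1 * v 0) := by ring
    rw [detAbs, h, Int.natAbs_neg]
    exact hd⟩
  loopless := ⟨fun L h => h.1 rfl⟩

/-- Coordinatewise reduction mod 3. -/
def red3 (u : Fin 2 → ℤ) : Fin 2 → ZMod 3 := fun i => ((u i : ℤ) : ZMod 3)


lemma red3_ne_zero {u : Fin 2 → ℤ} (hu : Primitive u) : red3 u ≠ 0 := by
  intro h
  have h0 : ((u 0 : ℤ) : ZMod 3) = 0 := congrFun h 0
  have h1 : ((u 1 : ℤ) : ZMod 3) = 0 := congrFun h 1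
  rw [ZMod.intCast_zmod_eq_zero_iff_dvd] at h0 h1
  have : (3 : ℤ) ∣ (Int.gcd (u 0) (u 1) : ℤ) := Int.dvd_coe_gcd h0 h1
  rw [hu] at this
  norm_num at this

lemma red3_smul (a : ℤ) (v : Fin 2 → ℤ) : red3 (a • v) = (a : ZMod 3) • red3 v := by
  funext i
  simp [red3]

lemma red3_mem_span {u v : Fin 2 → ℤ} (h : u ∈ Submodule.span ℤ {v}) :
    red3 u ∈ Submodule.span (ZMod 3) {red3 v} := by
  rw [Submodule.mem_span_singleton] at h
  obtain ⟨a, rfl⟩ := h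
  rw [Submodule.mem_span_singleton]
  exact ⟨a, (red3_smul a v).symm⟩

def wvec : Fin 4 → (Fin 2 → ZMod 3) := ![![1,0], ![0,1], ![1,1], ![1,2]]

lemma key_aux : ∀ v : Fin 2 → ZMod 3, v ≠ 0 → ∃ i : Fin 4, ∃ c : ZMod 3, c ≠ 0 ∧ c • wvec i = v := by
  decide

lemma card_lines :
    Nat.card {W : Submodule (ZMod 3) (Fin 2 → ZMod 3) // Module.finrank (ZMod 3) W = 1}
      = 4 := by
  have hw : ∀ i, wvec i ≠ 0 := by decide
  let f : Fin 4 → {W : Submodule (ZMod 3) (Fin 2 → ZMod 3) // Module.finrank (ZMod 3) W = 1} :=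
    fun i => ⟨Submodule.span (ZMod 3) {wvec i}, finrank_span_singleton (hw i)⟩
  have hinj : Function.Injective f := by
    intro i j h
    have hmem : wvec i ∈ Submodule.span (ZMod 3) {wvec j} := by
      have : Submodule.span (ZMod 3) {wvec i} = Submodule.span (ZMod 3) {wvec j} :=
        congrArg Subtype.val h
      rw [← this]
      exact Submodule.mem_span_singleton_self _
    rw [Submodule.mem_span_singleton] at hmem
    clear h f
    revert hmem
    revert i j
    decide
  have hsurj : Function.Surjective f := by
    rintro ⟨W, hW⟩
    have : Nontrivial W := by
      apply Module.nontrivial_of_finrank_pos (R := ZMod 3); omega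
    obtain ⟨⟨v, hvW⟩, hv0⟩ := exists_ne (0 : W)
    have hv : v ≠ 0 := fun h => hv0 (Subtype.ext h)
    have hle : Submodule.span (ZMod 3) {v} ≤ W := by
      rw [Submodule.span_singleton_le_iff_mem]; exact hvW
    have hWeq : Submodule.span (ZMod 3) {v} = W :=
      Submodule.eq_of_le_of_finrank_eq hle (by rw [finrank_span_singleton hv, hW])
    obtain ⟨i, c, hc, hcv⟩ := key_aux v hv
    refine ⟨i, ?_⟩
    apply Subtype.ext
    show Submodule.span (ZMod 3) {wvec i} = W
    rw [← hWeq, ← hcv, Submodule.span_singleton_smul_eq (IsUnit.mk0 c hc)]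
  rw [Nat.card_congr (Equiv.ofBijective f ⟨hinj, hsurj⟩).symm]
  simp

/-- Reduction mod 3 is a proper 4-coloring of `F'`: the reduction of a line is a
well-defined one-dimensional subspace of `(ℤ/3ℤ)²`, there are exactly 4 such subspaces,
and lines with `d(L₁,L₂) ∈ {1,2}` have distinct reductions. -/
theorem mod_three_coloring :
    (∀ L : Line, ∀ u v : Fin 2 → ℤ, Primitive u → Primitive v →
        L.1 = Submodule.span ℤ {u} → L.1 = Submodule.span ℤ {v} →
        Submodule.span (ZMod 3) {red3 u} = Submodule.span (ZMod 3) {red3 v}) ∧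
    (∀ u : Fin 2 → ℤ, Primitive u →
        Module.finrank (ZMod 3) (Submodule.span (ZMod 3) {red3 u}) = 1) ∧
    Nat.card {W : Submodule (ZMod 3) (Fin 2 → ZMod 3) // Module.finrank (ZMod 3) W = 1}
      = 4 ∧
    (∀ u v : Fin 2 → ℤ, Primitive u → Primitive v →
        (detAbs u v = 1 ∨ detAbs u v = 2) →
        Submodule.span (ZMod 3) {red3 u} ≠ Submodule.span (ZMod 3) {red3 v}) := by

  refine ⟨?_, ?_, card_lines, ?_⟩
  · intro L u v hu hv hLu hLv
    have hspan : Submodule.span ℤ {u} = Submodule.span ℤ {v} := by rw [← hLu, hLv]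
    have h1 : u ∈ Submodule.span ℤ {v} := by
      rw [← hspan]; exact Submodule.mem_span_singleton_self _
    have h2 : v ∈ Submodule.span ℤ {u} := by
      rw [hspan]; exact Submodule.mem_span_singleton_self _
    exact le_antisymm
      (Submodule.span_le.2 (Set.singleton_subset_iff.2 (red3_mem_span h1)))
      (Submodule.span_le.2 (Set.singleton_subset_iff.2 (red3_mem_span h2)))
  · intro u hu
    exact finrank_span_singleton (red3_ne_zero hu)
  · intro u v hu hv hd heq
    have hmem : red3 u ∈ Submodule.span (ZMod 3) {red3 v} := by
      rw [← heq]; exact Submodule.mem_span_singleton_self _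
    rw [Submodule.mem_span_singleton] at hmem
    obtain ⟨c, hc⟩ := hmem
    have h0 : ((u 0 : ℤ) : ZMod 3) = c * ((v 0 : ℤ) : ZMod 3) := by
      have := congrFun hc 0; simpa [red3] using this.symm
    have h1 : ((u 1 : ℤ) : ZMod 3) = c * ((v 1 : ℤ) : ZMod 3) := by
      have := congrFun hc 1; simpa [red3] using this.symm
    have hdet : ((u 0 * v 1 - u 1 * v 0 : ℤ) : ZMod 3) = 0 := by
      push_cast
      rw [h0, h1]
      ring
    rw [ZMod.intCast_zmod_eq_zero_iff_dvd] at hdet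
    have h3 : (3 : ℤ).natAbs ∣ (u 0 * v 1 - u 1 * v 0).natAbs :=
      Int.natAbs_dvd_natAbs.2 hdet
    unfold detAbs at hd
    omega
end

section
/- The chromatic number of the graph F' (lines in ℤ², adjacent when d(L₁,L₂) ∈ {1,2}) equals 4. -/
/-! ### Auxiliary lemmas -/

lemma Primitive.ne_zero' {u : Fin 2 → ℤ} (hu : Primitive u) : u ≠ 0 := by
  intro h
  simp [Primitive, h] at hu

lemma span_eq_pm {u v : Fin 2 → ℤ} (hu : u ≠ 0)
    (h : Submodule.span ℤ {u} = Submodule.span ℤ {v}) : v = u ∨ v = -u := by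
  have hv : v ∈ Submodule.span ℤ {u} := by
    rw [h]; exact Submodule.mem_span_singleton_self v
  have hu' : u ∈ Submodule.span ℤ {v} := by
    rw [← h]; exact Submodule.mem_span_singleton_self u
  rw [Submodule.mem_span_singleton] at hv hu'
  obtain ⟨c, hc⟩ := hv
  obtain ⟨d, hd⟩ := hu'
  have hdc : (d * c) • u = u := by rw [mul_smul, hc, hd]
  obtain ⟨i, hi⟩ : ∃ i, u i ≠ 0 := by
    by_contra hco
    push_neg at hco
    exact hu (funext hco)
  have h1 : d * c = 1 := by
    have h2 : d * c * u i = 1 * u i := by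
      have := congrFun hdc i
      simpa [Pi.smul_apply, smul_eq_mul] using this
    exact mul_right_cancel₀ hi h2
  have : c = 1 ∨ c = -1 := Int.isUnit_iff.mp (IsUnit.of_mul_eq_one (a := c) d (by linarith [mul_comm d c]))
  rcases this with h' | h'
  · left; rw [← hc, h', one_smul]
  · right; rw [← hc, h']
    funext j; simp

lemma detAbs_neg_left (u v : Fin 2 → ℤ) : detAbs (-u) v = detAbs u v := by
  unfold detAbs
  have : (-u) 0 * v 1 - (-u) 1 * v 0 = -(u 0 * v 1 - u 1 * v 0) := by simp; ring
  rw [this, Int.natAbs_neg]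

lemma detAbs_neg_right (u v : Fin 2 → ℤ) : detAbs u (-v) = detAbs u v := by
  unfold detAbs
  have : u 0 * (-v) 1 - u 1 * (-v) 0 = -(u 0 * v 1 - u 1 * v 0) := by simp; ring
  rw [this, Int.natAbs_neg]

/-- The chosen generator of a line. -/
noncomputable def gen (L : Line) : Fin 2 → ℤ := L.2.choose

lemma gen_prim (L : Line) : Primitive (gen L) := L.2.choose_spec.1

lemma gen_span (L : Line) : L.1 = Submodule.span ℤ {gen L} := L.2.choose_spec.2

/-- The coloring function on `𝔽₃² \ {0}`, i.e. by points of `P¹(𝔽₃)`. -/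
def f3 (x y : ZMod 3) : Fin 4 :=
  if y = 0 then 0 else if x = 0 then 1 else if x = y then 2 else 3

lemma f3_prop : ∀ x0 x1 y0 y1 : ZMod 3, (x0 ≠ 0 ∨ x1 ≠ 0) → (y0 ≠ 0 ∨ y1 ≠ 0) →
    x0 * y1 - x1 * y0 ≠ 0 → f3 x0 x1 ≠ f3 y0 y1 := by decide

noncomputable def lineColor (L : Line) : Fin 4 :=
  f3 ((gen L 0 : ZMod 3)) ((gen L 1 : ZMod 3))

lemma prim_mod3 {u : Fin 2 → ℤ} (hu : Primitive u) :
    ((u 0 : ZMod 3) ≠ 0 ∨ (u 1 : ZMod 3) ≠ 0) := by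
  by_contra h
  push_neg at h
  obtain ⟨h0, h1⟩ := h
  rw [ZMod.intCast_zmod_eq_zero_iff_dvd] at h0 h1
  have : (3 : ℤ) ∣ (Int.gcd (u 0) (u 1) : ℤ) := Int.dvd_coe_gcd h0 h1
  rw [hu] at this
  norm_num at this

/-- F' is 4-colorable. -/
lemma fprime_colorable : Fprime.Colorable 4 := by
  refine ⟨SimpleGraph.Coloring.mk lineColor ?_⟩
  rintro L₁ L₂ ⟨hne, u, v, hu, hv, h1, h2, hd⟩
  -- the chosen generators are ±u, ±v
  have hg1 : gen L₁ = u ∨ gen L₁ = -u :=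
    span_eq_pm hu.ne_zero' (h1.symm.trans (gen_span L₁))
  have hg2 : gen L₂ = v ∨ gen L₂ = -v :=
    span_eq_pm hv.ne_zero' (h2.symm.trans (gen_span L₂))
  have hdet : detAbs (gen L₁) (gen L₂) = 1 ∨ detAbs (gen L₁) (gen L₂) = 2 := by
    rcases hg1 with e1 | e1 <;> rcases hg2 with e2 | e2 <;>
      rw [e1, e2] <;>
      (try simp only [detAbs_neg_left, detAbs_neg_right]) <;> exact hd
  set a := gen L₁ with ha
  set b := gen L₂ with hb
  have hmod : ((a 0 : ZMod 3) * (b 1 : ZMod 3) - (a 1 : ZMod 3) * (b 0 : ZMod 3)) ≠ 0 := by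
    set D : ℤ := a 0 * b 1 - a 1 * b 0 with hD
    have hcast : ((D : ℤ) : ZMod 3) =
        (a 0 : ZMod 3) * (b 1 : ZMod 3) - (a 1 : ZMod 3) * (b 0 : ZMod 3) := by
      push_cast [hD]; ring
    rw [← hcast]
    have : D.natAbs = 1 ∨ D.natAbs = 2 := hdet
    rcases this with h | h <;>
      rcases Int.natAbs_eq_iff.mp h with h' | h' <;>
      rw [h'] <;> decide
  exact f3_prop _ _ _ _ (prim_mod3 (gen_prim L₁)) (prim_mod3 (gen_prim L₂)) hmod

/-! ### The 4-clique -/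

def w1 : Fin 2 → ℤ := ![1, 0]
def w2 : Fin 2 → ℤ := ![0, 1]
def w3 : Fin 2 → ℤ := ![1, 1]
def w4 : Fin 2 → ℤ := ![1, -1]

lemma w1p : Primitive w1 := by unfold Primitive; decide
lemma w2p : Primitive w2 := by unfold Primitive; decide
lemma w3p : Primitive w3 := by unfold Primitive; decide
lemma w4p : Primitive w4 := by unfold Primitive; decide

noncomputable def mkL (u : Fin 2 → ℤ) (hu : Primitive u) : Line :=
  ⟨Submodule.span ℤ {u}, u, hu, rfl⟩

lemma mkL_adj {u v : Fin 2 → ℤ} (hu : Primitive u) (hv : Primitive v)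
    (hd : detAbs u v = 1 ∨ detAbs u v = 2) : Fprime.Adj (mkL u hu) (mkL v hv) := by
  refine ⟨?_, u, v, hu, hv, rfl, rfl, hd⟩
  intro h
  have h' : Submodule.span ℤ {u} = Submodule.span ℤ {v} := congrArg Subtype.val h
  rcases span_eq_pm hu.ne_zero' h' with e | e
  · rw [e] at hd
    unfold detAbs at hd
    have : u 0 * u 1 - u 1 * u 0 = 0 := by ring
    rw [this] at hd
    simp at hd
  · rw [e] at hd
    rw [detAbs_neg_right] at hd
    unfold detAbs at hd
    have : u 0 * u 1 - u 1 * u 0 = 0 := by ring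
    rw [this] at hd
    simp at hd

lemma no_three_coloring : ¬ Fprime.Colorable 3 := by
  rintro ⟨C⟩
  have key : ∀ a b c d : Fin 3, a = b ∨ a = c ∨ a = d ∨ b = c ∨ b = d ∨ c = d := by
    decide
  have h12 : Fprime.Adj (mkL w1 w1p) (mkL w2 w2p) := mkL_adj _ _ (by left; decide)
  have h13 : Fprime.Adj (mkL w1 w1p) (mkL w3 w3p) := mkL_adj _ _ (by left; decide)
  have h14 : Fprime.Adj (mkL w1 w1p) (mkL w4 w4p) := mkL_adj _ _ (by left; decide)
  have h23 : Fprime.Adj (mkL w2 w2p) (mkL w3 w3p) := mkL_adj _ _ (by left; decide)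
  have h24 : Fprime.Adj (mkL w2 w2p) (mkL w4 w4p) := mkL_adj _ _ (by left; decide)
  have h34 : Fprime.Adj (mkL w3 w3p) (mkL w4 w4p) := mkL_adj _ _ (by right; decide)
  rcases key (C (mkL w1 w1p)) (C (mkL w2 w2p)) (C (mkL w3 w3p)) (C (mkL w4 w4p)) with
    h | h | h | h | h | h
  · exact C.valid h12 h
  · exact C.valid h13 h
  · exact C.valid h14 h
  · exact C.valid h23 h
  · exact C.valid h24 h
  · exact C.valid h34 h

/-- `χ(F') = 4`. -/
theorem chromatic_Fprime_eq_four : Fprime.chromaticNumber = 4 := by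
  refine le_antisymm ?_ ?_
  · exact_mod_cast fprime_colorable.chromaticNumber_le
  · by_contra h
    push_neg at h
    have h4 : Fprime.chromaticNumber ≤ 3 := by
      have := Order.le_of_lt_add_one (by exact_mod_cast h : Fprime.chromaticNumber < 3 + 1)
      exact_mod_cast this
    rw [show ((3:ℕ∞)) = ((3:ℕ):ℕ∞) by norm_num,
      SimpleGraph.chromaticNumber_le_iff_colorable] at h4
    exact no_three_coloring h4
end
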